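/- arXiv:0906.5374 — 12 statements merged into one kernel-verified Lean document; each statement's English description precedes it below -/
import Mathlib

section
/- Let F be a field of characteristic ≠ 2, let D be a quaternion algebra over F with canonical involution σ, and let c ∈ D be invertible with c ∉ F·1 and σ(c) ≠ c. In each of the algebras A = Cay(D,c), A = Cay_m(D,c) and A = Cay_r(D,c), the element l = (0,1) satisfies l·l = (c,0), l·(l·l) = (0, σ(c)) and (l·l)·l = (0, c); hence (l·l)·l ≠ l·(l·l), so A is not third-power associative (and in particular A is not a power-associative and not a quadratic algebra). -/
open Quaternion

/-- The Cayley–Dickson doubling multiplication on `D ⊕ D` with the scalar `c`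
on the left-hand side: `(u,v)(u',v') = (uu' + c(σ(v')v), v'u + vσ(u'))`. -/
def cayMul {F : Type*} [Field F] {a b : F} (c : ℍ[F,a,b])
    (x y : ℍ[F,a,b] × ℍ[F,a,b]) : ℍ[F,a,b] × ℍ[F,a,b] :=
  (x.1 * y.1 + c * (star y.2 * x.2), y.2 * x.1 + x.2 * star y.1)

/-- The Cayley–Dickson doubling multiplication with the scalar `c` in the middle:
`(u,v)(u',v') = (uu' + σ(v')(cv), v'u + vσ(u'))`. -/
def caymMul {F : Type*} [Field F] {a b : F} (c : ℍ[F,a,b])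
    (x y : ℍ[F,a,b] × ℍ[F,a,b]) : ℍ[F,a,b] × ℍ[F,a,b] :=
  (x.1 * y.1 + star y.2 * (c * x.2), y.2 * x.1 + x.2 * star y.1)

/-- The Cayley–Dickson doubling multiplication with the scalar `c` on the right-hand
side: `(u,v)(u',v') = (uu' + (σ(v')v)c, v'u + vσ(u'))`. -/
def cayrMul {F : Type*} [Field F] {a b : F} (c : ℍ[F,a,b])
    (x y : ℍ[F,a,b] × ℍ[F,a,b]) : ℍ[F,a,b] × ℍ[F,a,b] :=
  (x.1 * y.1 + (star y.2 * x.2) * c, y.2 * x.1 + x.2 * star y.1)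

/-- In each of `Cay(D,c)`, `Cay_m(D,c)`, `Cay_r(D,c)` the element `l = (0,1)` satisfies
`l·l = (c,0)`, `l·(l·l) = (0,σ(c))` and `(l·l)·l = (0,c)`; hence `(l·l)·l ≠ l·(l·l)`,
so these algebras are not third-power associative. -/
theorem stmt_0 {F : Type*} [Field F] (hchar : (2 : F) ≠ 0) {a b : F}
    (c : ℍ[F,a,b]) (hc : IsUnit c)
    (hc1 : ∀ t : F, c ≠ algebraMap F ℍ[F,a,b] t) (hcs : star c ≠ c)
    (mul : (ℍ[F,a,b] × ℍ[F,a,b]) → (ℍ[F,a,b] × ℍ[F,a,b]) → ℍ[F,a,b] × ℍ[F,a,b])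
    (hmul : mul = cayMul c ∨ mul = caymMul c ∨ mul = cayrMul c) :
    mul (0, 1) (0, 1) = (c, 0) ∧
    mul (0, 1) (mul (0, 1) (0, 1)) = (0, star c) ∧
    mul (mul (0, 1) (0, 1)) (0, 1) = (0, c) ∧
    mul (mul (0, 1) (0, 1)) (0, 1) ≠ mul (0, 1) (mul (0, 1) (0, 1)) := by
  have key : ∀ d : ℍ[F,a,b], (0, c) ≠ ((0 : ℍ[F,a,b]), star c) := by
    intro d h
    exact hcs (congrArg Prod.snd h).symm
  rcases hmul with rfl | rfl | rfl <;>
    refine ⟨?_, ?_, ?_, ?_⟩ <;>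
      simp [cayMul, caymMul, cayrMul, Prod.ext_iff, hcs, Ne.symm hcs]
end

section
/- Let F be a field of characteristic ≠ 2, let D be a quaternion division algebra over F, let c ∈ D be invertible with c ∉ F·1, and let A = Cay(D,c). Then the left nucleus {x ∈ A | (xy)z = x(yz) for all y,z ∈ A}, the middle nucleus {x ∈ A | (yx)z = y(xz) for all y,z ∈ A}, the right nucleus {x ∈ A | (yz)x = y(zx) for all y,z ∈ A}, the commuter {x ∈ A | xy = yx for all y ∈ A}, and hence the nucleus and the center of A, are all equal to F·(1,0). -/
open Quaternion

section Aux

variable {F : Type*} [Field F] {a b : F}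

lemma cay_star_alg (t : F) : star (algebraMap F ℍ[F,a,b] t) = algebraMap F ℍ[F,a,b] t := by
  rw [QuaternionAlgebra.algebraMap_eq, QuaternionAlgebra.star_mk]
  ext <;> simp

lemma cay_scalar_central (hchar : (2:F) ≠ 0) (ha : a ≠ 0) (p : ℍ[F,a,b])
    (h1 : p * ⟨0,1,0,0⟩ = (⟨0,1,0,0⟩ : ℍ[F,a,b]) * p)
    (h2 : p * ⟨0,0,1,0⟩ = (⟨0,0,1,0⟩ : ℍ[F,a,b]) * p) :
    ∃ t : F, p = algebraMap F ℍ[F,a,b] t := by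
  obtain ⟨x, y, z, w⟩ := p
  refine ⟨x, ?_⟩
  rw [QuaternionAlgebra.ext_iff] at h1 h2
  simp [QuaternionAlgebra.algebraMap_eq] at h1 h2 ⊢
  have two_mul_eq_zero : ∀ u : F, u = -u → u = 0 := by
    intro u hu
    have : (2:F) * u = 0 := by linear_combination hu
    rcases mul_eq_zero.1 this with h | h
    · exact absurd h hchar
    · exact h
  have hw : w = 0 := by
    have := two_mul_eq_zero (a * w) (by linear_combination -h1.1)
    rcases mul_eq_zero.1 this with h | h
    · exact absurd h ha
    · exact h
  exact ⟨two_mul_eq_zero y h2.2, two_mul_eq_zero z (by linear_combination -h1.2), hw⟩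

lemma cay_back (c : ℍ[F,a,b]) (t : F) :
    (∀ y z, cayMul c (cayMul c (algebraMap F ℍ[F,a,b] t, 0) y) z
      = cayMul c (algebraMap F ℍ[F,a,b] t, 0) (cayMul c y z)) ∧
    (∀ y z, cayMul c (cayMul c y (algebraMap F ℍ[F,a,b] t, 0)) z
      = cayMul c y (cayMul c (algebraMap F ℍ[F,a,b] t, 0) z)) ∧
    (∀ y z, cayMul c (cayMul c y z) (algebraMap F ℍ[F,a,b] t, 0)
      = cayMul c y (cayMul c z (algebraMap F ℍ[F,a,b] t, 0))) ∧
    (∀ y, cayMul c (algebraMap F ℍ[F,a,b] t, 0) y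
      = cayMul c y (algebraMap F ℍ[F,a,b] t, 0)) := by
  refine ⟨fun y z => ?_, fun y z => ?_, fun y z => ?_, fun y => ?_⟩ <;>
    simp [cayMul, Prod.ext_iff, cay_star_alg, QuaternionAlgebra.coe_mul_eq_smul,
      QuaternionAlgebra.mul_coe_eq_smul, smul_mul_assoc, mul_smul_comm,
      mul_assoc, mul_add, smul_add]

end Aux

set_option maxHeartbeats 2000000 in
/-- For a quaternion division algebra `D` over a field `F` of characteristic ≠ 2 and an
invertible `c ∈ D` not in `F·1`, the left, middle and right nuclei, the commuter, the
nucleus and the center of `A = Cay(D,c)` all equal `F·(1,0)`. -/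
theorem stmt_1 {F : Type*} [Field F] (hchar : (2 : F) ≠ 0) {a b : F}
    (hD : ∀ x y : ℍ[F,a,b], x * y = 0 → x = 0 ∨ y = 0)
    (c : ℍ[F,a,b]) (hc : IsUnit c)
    (hc1 : ∀ t : F, c ≠ algebraMap F ℍ[F,a,b] t) :
    ({x : ℍ[F,a,b] × ℍ[F,a,b] | ∀ y z, cayMul c (cayMul c x y) z = cayMul c x (cayMul c y z)}
        = {x | ∃ t : F, x = (algebraMap F ℍ[F,a,b] t, 0)}) ∧
    ({x : ℍ[F,a,b] × ℍ[F,a,b] | ∀ y z, cayMul c (cayMul c y x) z = cayMul c y (cayMul c x z)}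
        = {x | ∃ t : F, x = (algebraMap F ℍ[F,a,b] t, 0)}) ∧
    ({x : ℍ[F,a,b] × ℍ[F,a,b] | ∀ y z, cayMul c (cayMul c y z) x = cayMul c y (cayMul c z x)}
        = {x | ∃ t : F, x = (algebraMap F ℍ[F,a,b] t, 0)}) ∧
    ({x : ℍ[F,a,b] × ℍ[F,a,b] | ∀ y, cayMul c x y = cayMul c y x}
        = {x | ∃ t : F, x = (algebraMap F ℍ[F,a,b] t, 0)}) ∧
    ({x : ℍ[F,a,b] × ℍ[F,a,b] |
        (∀ y z, cayMul c (cayMul c x y) z = cayMul c x (cayMul c y z)) ∧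
        (∀ y z, cayMul c (cayMul c y x) z = cayMul c y (cayMul c x z)) ∧
        (∀ y z, cayMul c (cayMul c y z) x = cayMul c y (cayMul c z x))}
        = {x | ∃ t : F, x = (algebraMap F ℍ[F,a,b] t, 0)}) ∧
    ({x : ℍ[F,a,b] × ℍ[F,a,b] |
        ((∀ y z, cayMul c (cayMul c x y) z = cayMul c x (cayMul c y z)) ∧
         (∀ y z, cayMul c (cayMul c y x) z = cayMul c y (cayMul c x z)) ∧
         (∀ y z, cayMul c (cayMul c y z) x = cayMul c y (cayMul c z x))) ∧
        (∀ y, cayMul c x y = cayMul c y x)}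
        = {x | ∃ t : F, x = (algebraMap F ℍ[F,a,b] t, 0)}) := by
  have ha : a ≠ 0 := by
    intro h
    have h0 : (⟨0,1,0,0⟩ : ℍ[F,a,b]) * ⟨0,1,0,0⟩ = 0 := by ext <;> simp [h]
    rcases hD _ _ h0 with h1 | h1 <;>
      exact one_ne_zero (α := F) (by simpa using congrArg QuaternionAlgebra.imI h1)
  have cancel : ∀ q e : ℍ[F,a,b], e ≠ 0 → q * e = 0 → q = 0 :=
    fun q e he h => (hD q e h).resolve_right he
  have hk2 : (⟨0,0,0,2⟩ : ℍ[F,a,b]) ≠ 0 := fun h =>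
    hchar (by simpa using congrArg QuaternionAlgebra.imK h)
  have hk2' : (⟨0,0,0,-2⟩ : ℍ[F,a,b]) ≠ 0 := fun h =>
    hchar (by simpa using congrArg QuaternionAlgebra.imK h)
  have hi2 : (⟨0,-2,0,0⟩ : ℍ[F,a,b]) ≠ 0 := fun h =>
    hchar (by simpa using congrArg QuaternionAlgebra.imI h)
  -- left nucleus
  have hL : {x : ℍ[F,a,b] × ℍ[F,a,b] |
      ∀ y z, cayMul c (cayMul c x y) z = cayMul c x (cayMul c y z)}
      = {x | ∃ t : F, x = (algebraMap F ℍ[F,a,b] t, 0)} := by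
    ext x
    simp only [Set.mem_setOf_eq]
    constructor
    · intro hx
      have h := congrArg Prod.snd (hx ((⟨0,1,0,0⟩ : ℍ[F,a,b]), 0) ((⟨0,0,1,0⟩ : ℍ[F,a,b]), 0))
      simp only [cayMul] at h; simp at h
      have hq0 : x.2 = 0 := by
        refine cancel _ _ hk2 ?_
        have e : (⟨0,0,0,2⟩ : ℍ[F,a,b])
            = ⟨0,-1,0,0⟩ * ⟨0,0,-1,0⟩ - ⟨0,0,0,-1⟩ := by ext <;> simp <;> ring
        rw [e, mul_sub, ← mul_assoc, h, sub_self]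
      have h2 := congrArg Prod.snd (hx ((⟨0,1,0,0⟩ : ℍ[F,a,b]), 0) (0, 1))
      simp only [cayMul] at h2; simp at h2
      have h3 := congrArg Prod.snd (hx ((⟨0,0,1,0⟩ : ℍ[F,a,b]), 0) (0, 1))
      simp only [cayMul] at h3; simp at h3
      obtain ⟨t, ht⟩ := cay_scalar_central hchar ha x.1 h2 h3
      exact ⟨t, Prod.ext_iff.mpr ⟨ht, hq0⟩⟩
    · rintro ⟨t, rfl⟩
      exact (cay_back c t).1
  -- middle nucleus
  have hM : {x : ℍ[F,a,b] × ℍ[F,a,b] |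
      ∀ y z, cayMul c (cayMul c y x) z = cayMul c y (cayMul c x z)}
      = {x | ∃ t : F, x = (algebraMap F ℍ[F,a,b] t, 0)} := by
    ext x
    simp only [Set.mem_setOf_eq]
    constructor
    · intro hx
      have h := congrArg Prod.snd (hx ((⟨0,1,0,0⟩ : ℍ[F,a,b]), 0) ((⟨0,0,1,0⟩ : ℍ[F,a,b]), 0))
      simp only [cayMul] at h; simp at h
      have hq0 : x.2 = 0 := by
        refine cancel _ _ hk2' ?_
        have e : (⟨0,0,0,-2⟩ : ℍ[F,a,b])
            = ⟨0,1,0,0⟩ * ⟨0,0,-1,0⟩ - ⟨0,0,-1,0⟩ * ⟨0,1,0,0⟩ := by ext <;> simp <;> ring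
        rw [e, mul_sub, ← mul_assoc, ← mul_assoc, h, sub_self]
      have h2 := congrArg Prod.snd (hx (0, 1) ((⟨0,1,0,0⟩ : ℍ[F,a,b]), 0))
      simp only [cayMul] at h2; simp at h2
      have h3 := congrArg Prod.snd (hx (0, 1) ((⟨0,0,1,0⟩ : ℍ[F,a,b]), 0))
      simp only [cayMul] at h3; simp at h3
      have e1 : (⟨0,-1,0,0⟩ : ℍ[F,a,b]) = -⟨0,1,0,0⟩ := by ext <;> simp
      have e2 : (⟨0,0,-1,0⟩ : ℍ[F,a,b]) = -⟨0,0,1,0⟩ := by ext <;> simp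
      rw [e1, mul_neg, neg_mul, neg_inj] at h2
      rw [e2, mul_neg, neg_mul, neg_inj] at h3
      obtain ⟨t, ht⟩ := cay_scalar_central hchar ha (star x.1) h2 h3
      have hp : x.1 = algebraMap F ℍ[F,a,b] t := by
        rw [← star_star x.1, ht, cay_star_alg]
      exact ⟨t, Prod.ext_iff.mpr ⟨hp, hq0⟩⟩
    · rintro ⟨t, rfl⟩
      exact (cay_back c t).2.1
  -- right nucleus
  have hR : {x : ℍ[F,a,b] × ℍ[F,a,b] |
      ∀ y z, cayMul c (cayMul c y z) x = cayMul c y (cayMul c z x)}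
      = {x | ∃ t : F, x = (algebraMap F ℍ[F,a,b] t, 0)} := by
    ext x
    simp only [Set.mem_setOf_eq]
    constructor
    · intro hx
      have h := congrArg Prod.snd (hx ((⟨0,1,0,0⟩ : ℍ[F,a,b]), 0) ((⟨0,0,1,0⟩ : ℍ[F,a,b]), 0))
      simp only [cayMul] at h; simp at h
      have hq0 : x.2 = 0 := by
        refine cancel _ _ hk2 ?_
        have e : (⟨0,0,0,2⟩ : ℍ[F,a,b])
            = ⟨0,0,0,1⟩ - ⟨0,0,1,0⟩ * ⟨0,1,0,0⟩ := by ext <;> simp <;> ring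
        rw [e, mul_sub, ← mul_assoc, ← h, sub_self]
      have h2 := congrArg Prod.snd (hx (0, 1) ((⟨0,1,0,0⟩ : ℍ[F,a,b]), 0))
      simp only [cayMul] at h2; simp at h2
      have h3 := congrArg Prod.snd (hx (0, 1) ((⟨0,0,1,0⟩ : ℍ[F,a,b]), 0))
      simp only [cayMul] at h3; simp at h3
      have e1 : (⟨0,-1,0,0⟩ : ℍ[F,a,b]) = -⟨0,1,0,0⟩ := by ext <;> simp
      have e2 : (⟨0,0,-1,0⟩ : ℍ[F,a,b]) = -⟨0,0,1,0⟩ := by ext <;> simp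
      rw [e1, mul_neg, neg_mul, neg_inj] at h2
      rw [e2, mul_neg, neg_mul, neg_inj] at h3
      obtain ⟨t, ht⟩ := cay_scalar_central hchar ha (star x.1) h2.symm h3.symm
      have hp : x.1 = algebraMap F ℍ[F,a,b] t := by
        rw [← star_star x.1, ht, cay_star_alg]
      exact ⟨t, Prod.ext_iff.mpr ⟨hp, hq0⟩⟩
    · rintro ⟨t, rfl⟩
      exact (cay_back c t).2.2.1
  -- commuter
  have hC : {x : ℍ[F,a,b] × ℍ[F,a,b] | ∀ y, cayMul c x y = cayMul c y x}
      = {x | ∃ t : F, x = (algebraMap F ℍ[F,a,b] t, 0)} := by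
    ext x
    simp only [Set.mem_setOf_eq]
    constructor
    · intro hx
      have h := congrArg Prod.snd (hx ((⟨0,1,0,0⟩ : ℍ[F,a,b]), 0))
      simp only [cayMul] at h; simp at h
      have hq0 : x.2 = 0 := by
        refine cancel _ _ hi2 ?_
        have e : (⟨0,-2,0,0⟩ : ℍ[F,a,b]) = ⟨0,-1,0,0⟩ - ⟨0,1,0,0⟩ := by ext <;> simp <;> ring
        rw [e, mul_sub, h, sub_self]
      have h2 := congrArg Prod.fst (hx ((⟨0,1,0,0⟩ : ℍ[F,a,b]), 0))
      simp only [cayMul] at h2; simp at h2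
      have h3 := congrArg Prod.fst (hx ((⟨0,0,1,0⟩ : ℍ[F,a,b]), 0))
      simp only [cayMul] at h3; simp at h3
      obtain ⟨t, ht⟩ := cay_scalar_central hchar ha x.1 h2 h3
      exact ⟨t, Prod.ext_iff.mpr ⟨ht, hq0⟩⟩
    · rintro ⟨t, rfl⟩
      exact (cay_back c t).2.2.2
  refine ⟨hL, hM, hR, hC, ?_, ?_⟩
  · ext x
    simp only [Set.mem_setOf_eq]
    constructor
    · rintro ⟨h1, -, -⟩
      exact (Set.ext_iff.mp hL x).mp h1
    · rintro ⟨t, rfl⟩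
      exact ⟨(cay_back c t).1, (cay_back c t).2.1, (cay_back c t).2.2.1⟩
  · ext x
    simp only [Set.mem_setOf_eq]
    constructor
    · rintro ⟨⟨h1, -, -⟩, -⟩
      exact (Set.ext_iff.mp hL x).mp h1
    · rintro ⟨t, rfl⟩
      exact ⟨⟨(cay_back c t).1, (cay_back c t).2.1, (cay_back c t).2.2.1⟩, (cay_back c t).2.2.2⟩
end

section
/- Let F be a field of characteristic ≠ 2, let D be a quaternion division algebra over F, let c ∈ D be invertible with c ∉ F·1, and let A = Cay_m(D,c) or A = Cay_r(D,c). Then the left nucleus, the middle nucleus, the right nucleus, the commuter {x ∈ A | xy = yx for all y ∈ A}, and hence the nucleus and the center of A, are all equal to F·(1,0). -/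
set_option maxHeartbeats 1000000

open Quaternion

namespace CayAux

open QuaternionAlgebra

variable {F : Type*} [Field F] {a b : F}

lemma qk_ne_zero (hchar : (2:F) ≠ 0) :
    (⟨0,1,0,0⟩ * ⟨0,0,1,0⟩ - ⟨0,0,1,0⟩ * ⟨0,1,0,0⟩ : ℍ[F,a,b]) ≠ 0 := by
  intro h
  have := congrArg QuaternionAlgebra.imK h
  simp [QuaternionAlgebra.imK_mul] at this
  rw [show (1:F) + 1 = 2 by ring] at this
  exact hchar this

lemma cancel_right (hD : ∀ x y : ℍ[F,a,b], x * y = 0 → x = 0 ∨ y = 0)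
    {x w : ℍ[F,a,b]} (hw : w ≠ 0) (h : x * w = 0) : x = 0 :=
  ((hD _ _ h).resolve_right hw)

lemma cancel_left (hD : ∀ x y : ℍ[F,a,b], x * y = 0 → x = 0 ∨ y = 0)
    {x w : ℍ[F,a,b]} (hw : w ≠ 0) (h : w * x = 0) : x = 0 :=
  ((hD _ _ h).resolve_left hw)

/-- If `m` is central and `i*m` is central then `m = 0`. -/
lemma kill (hchar : (2:F) ≠ 0) (hD : ∀ x y : ℍ[F,a,b], x * y = 0 → x = 0 ∨ y = 0)
    (m : ℍ[F,a,b]) (h1 : ∀ p, m * p = p * m)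
    (h2 : ∀ p, (⟨0,1,0,0⟩ : ℍ[F,a,b]) * m * p = p * ((⟨0,1,0,0⟩ : ℍ[F,a,b]) * m)) : m = 0 := by
  have e := h2 ⟨0,0,1,0⟩
  rw [← h1 ⟨0,1,0,0⟩] at e
  have e2 : m * ((⟨0,1,0,0⟩ * ⟨0,0,1,0⟩ : ℍ[F,a,b]) - ⟨0,0,1,0⟩ * ⟨0,1,0,0⟩) = 0 := by
    rw [mul_sub, ← mul_assoc, e, ← mul_assoc, ← h1 ⟨0,0,1,0⟩, mul_assoc, sub_self]
  exact cancel_right hD (qk_ne_zero hchar) e2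

/-- Variant of `kill` with `m*i` central. -/
lemma kill' (hchar : (2:F) ≠ 0) (hD : ∀ x y : ℍ[F,a,b], x * y = 0 → x = 0 ∨ y = 0)
    (m : ℍ[F,a,b]) (h1 : ∀ p, m * p = p * m)
    (h2 : ∀ p, m * (⟨0,1,0,0⟩ : ℍ[F,a,b]) * p = p * (m * (⟨0,1,0,0⟩ : ℍ[F,a,b]))) : m = 0 := by
  refine kill hchar hD m h1 (fun p => ?_)
  have := h2 p
  rwa [h1 ⟨0,1,0,0⟩] at this

lemma central_scalar (hchar : (2:F) ≠ 0)
    (hD : ∀ x y : ℍ[F,a,b], x * y = 0 → x = 0 ∨ y = 0) (u : ℍ[F,a,b])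
    (h1 : u * ⟨0,1,0,0⟩ = ⟨0,1,0,0⟩ * u) (h2 : u * ⟨0,0,1,0⟩ = ⟨0,0,1,0⟩ * u) :
    ∃ t, u = algebraMap F ℍ[F,a,b] t := by
  have ha : a ≠ 0 := by
    intro h0
    have : (⟨0,1,0,0⟩ * ⟨0,1,0,0⟩ : ℍ[F,a,b]) = 0 := by
      ext <;> simp [QuaternionAlgebra.re_mul, QuaternionAlgebra.imI_mul, QuaternionAlgebra.imJ_mul, QuaternionAlgebra.imK_mul, h0]
    rcases hD _ _ this with h | h <;>
      · have := congrArg QuaternionAlgebra.imI h; simp at this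
  rw [QuaternionAlgebra.ext_iff] at h1 h2
  simp [QuaternionAlgebra.re_mul, QuaternionAlgebra.imI_mul, QuaternionAlgebra.imJ_mul, QuaternionAlgebra.imK_mul] at h1 h2
  have half : ∀ x : F, -x = x → x = 0 := by
    intro x h
    have h2 : 2 * x = 0 := by linear_combination -h
    rcases mul_eq_zero.mp h2 with h | h
    · exact absurd h hchar
    · exact h
  have hK : u.imK = 0 := by
    have := half _ h1.1
    rcases mul_eq_zero.mp this with h | h
    · exact absurd h ha
    · exact h
  have hJ : u.imJ = 0 := half _ h1.2
  have hI : u.imI = 0 := half _ h2.2.symm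
  refine ⟨u.re, ?_⟩
  rw [coe_algebraMap]
  ext <;> simp [hI, hJ, hK]

/-- A central element is a scalar (from commuting with everything). -/
lemma central_scalar' (hchar : (2:F) ≠ 0)
    (hD : ∀ x y : ℍ[F,a,b], x * y = 0 → x = 0 ∨ y = 0) (u : ℍ[F,a,b])
    (h : ∀ p, u * p = p * u) : ∃ t, u = algebraMap F ℍ[F,a,b] t :=
  central_scalar hchar hD u (h _) (h _)

lemma isUnit_ne_zero {c : ℍ[F,a,b]} (hc : IsUnit c) : c ≠ 0 := by
  rintro rfl
  obtain ⟨w, hw⟩ := hc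
  have h1 : (w : ℍ[F,a,b]) * ↑w⁻¹ = 1 := w.mul_inv
  rw [hw, zero_mul] at h1
  exact one_ne_zero h1.symm

/-- From `star v = v` and `v (star i - i) = 0` (via `v * star r = v * r` for all `r`),
conclude `v = 0`; here packaged: `v * star r = v * r` for all `r` implies `v = 0`. -/
lemma star_absorb (hchar : (2:F) ≠ 0)
    (hD : ∀ x y : ℍ[F,a,b], x * y = 0 → x = 0 ∨ y = 0) (v : ℍ[F,a,b])
    (h : ∀ r, v * star r = v * r) : v = 0 := by
  have e : v * (star (⟨0,1,0,0⟩ : ℍ[F,a,b]) - ⟨0,1,0,0⟩) = 0 := by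
    rw [mul_sub, h, sub_self]
  refine cancel_right hD ?_ e
  intro h0
  have := congrArg QuaternionAlgebra.imI h0
  rw [star_mk] at this
  simp at this
  rw [show (-1 : F) - 1 = -2 by ring] at this
  exact hchar (by linear_combination -this)

/-- From `∀ s, c * s * u = u * (c * s)` with `c` invertible, `u` is central. -/
lemma central_of_cs (hD : ∀ x y : ℍ[F,a,b], x * y = 0 → x = 0 ∨ y = 0)
    {c u : ℍ[F,a,b]} (hc : IsUnit c)
    (h : ∀ s, c * s * u = u * (c * s)) : ∀ w, u * w = w * u := by
  intro w
  have hci : c * ↑hc.unit⁻¹ = 1 := hc.mul_val_inv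
  have e := h ((↑hc.unit⁻¹ : ℍ[F,a,b]) * w)
  rw [← mul_assoc, hci, one_mul] at e
  exact e.symm

/-- For `cayr` middle nucleus: from `∀ s p, m * s * c * p = p * (m * s * c)` with
`c` an invertible non-scalar, `m = 0`. -/
lemma cayr_mid_kill (hchar : (2:F) ≠ 0)
    (hD : ∀ x y : ℍ[F,a,b], x * y = 0 → x = 0 ∨ y = 0) {c : ℍ[F,a,b]} (hc : IsUnit c)
    (hc1 : ∀ t : F, c ≠ algebraMap F ℍ[F,a,b] t) (m : ℍ[F,a,b])
    (key : ∀ s p, m * s * c * p = p * (m * s * c)) : m = 0 := by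
  by_contra hm
  set ci : ℍ[F,a,b] := ↑hc.unit⁻¹ with hcidef
  have hci : c * ci = 1 := hc.mul_val_inv
  have hic : ci * c = 1 := hc.val_inv_mul
  -- m is central
  have hmc : ∀ p, m * p = p * m := by
    intro p
    have e := key ci p
    rwa [mul_assoc m ci c, hic, mul_one] at e
  -- every ci * w * c is central
  have hcen : ∀ w p : ℍ[F,a,b], (ci * w * c) * p = p * (ci * w * c) := by
    intro w p
    have e := key (ci * w) p
    -- e : m * (ci * w) * c * p = p * (m * (ci * w) * c)
    have e2 : m * ((ci * w * c) * p) = m * (p * (ci * w * c)) := by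
      calc m * ((ci * w * c) * p) = m * (ci * w) * c * p := by noncomm_ring
        _ = p * (m * (ci * w) * c) := e
        _ = p * ((ci * w * c) * m) := by rw [mul_assoc m (ci * w) c, hmc ((ci * w) * c)]
        _ = (p * (ci * w * c)) * m := by noncomm_ring
        _ = m * (p * (ci * w * c)) := (hmc _).symm
    have h4 := sub_eq_zero.mpr e2
    rw [← mul_sub] at h4
    exact sub_eq_zero.mp (cancel_left hD hm h4)
  -- hence c commutes with everything
  have hccomm : ∀ w : ℍ[F,a,b], c * w = w * c := by
    intro w
    have e1 := hcen w c
    have e2 : c * (ci * w * c) = w * c := by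
      rw [← mul_assoc, ← mul_assoc, hci, one_mul]
    -- e1 : (ci*w*c)*c = c*(ci*w*c) = w*c
    have e3 : (ci * w * c) * c = w * c := e1.trans e2
    have e4 := congrArg (c * ·) e3
    -- e4 : c * ((ci*w*c)*c) = c * (w*c); LHS = w*c*c using hci
    have e5 : (w * c) * c = c * (w * c) := by
      calc (w * c) * c = (c * ci) * (w * c * c) := by rw [hci, one_mul]
        _ = c * ((ci * w * c) * c) := by noncomm_ring
        _ = c * (w * c) := e4
    have h6 : (w * c - c * w) * c = 0 := by
      rw [sub_mul]
      rw [show c * w * c = c * (w * c) from by noncomm_ring, ← e5]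
      noncomm_ring
    exact (sub_eq_zero.mp (cancel_right hD (isUnit_ne_zero hc) h6)).symm
  obtain ⟨t, ht⟩ := central_scalar' hchar hD c hccomm
  exact hc1 t ht

end CayAux

open CayAux QuaternionAlgebra in
/-- For a quaternion division algebra `D` over a field `F` of characteristic ≠ 2 and an
invertible `c ∈ D` not in `F·1`, the left, middle and right nuclei, the commuter, the
nucleus and the center of `A = Cay_m(D,c)` and of `A = Cay_r(D,c)` all equal `F·(1,0)`. -/
theorem stmt_2 {F : Type*} [Field F] (hchar : (2 : F) ≠ 0) {a b : F}
    (hD : ∀ x y : ℍ[F,a,b], x * y = 0 → x = 0 ∨ y = 0)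
    (c : ℍ[F,a,b]) (hc : IsUnit c)
    (hc1 : ∀ t : F, c ≠ algebraMap F ℍ[F,a,b] t)
    (mul : (ℍ[F,a,b] × ℍ[F,a,b]) → (ℍ[F,a,b] × ℍ[F,a,b]) → ℍ[F,a,b] × ℍ[F,a,b])
    (hmul : mul = caymMul c ∨ mul = cayrMul c) :
    ({x : ℍ[F,a,b] × ℍ[F,a,b] | ∀ y z, mul (mul x y) z = mul x (mul y z)}
        = {x | ∃ t : F, x = (algebraMap F ℍ[F,a,b] t, 0)}) ∧
    ({x : ℍ[F,a,b] × ℍ[F,a,b] | ∀ y z, mul (mul y x) z = mul y (mul x z)}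
        = {x | ∃ t : F, x = (algebraMap F ℍ[F,a,b] t, 0)}) ∧
    ({x : ℍ[F,a,b] × ℍ[F,a,b] | ∀ y z, mul (mul y z) x = mul y (mul z x)}
        = {x | ∃ t : F, x = (algebraMap F ℍ[F,a,b] t, 0)}) ∧
    ({x : ℍ[F,a,b] × ℍ[F,a,b] | ∀ y, mul x y = mul y x}
        = {x | ∃ t : F, x = (algebraMap F ℍ[F,a,b] t, 0)}) ∧
    ({x : ℍ[F,a,b] × ℍ[F,a,b] |
        (∀ y z, mul (mul x y) z = mul x (mul y z)) ∧
        (∀ y z, mul (mul y x) z = mul y (mul x z)) ∧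
        (∀ y z, mul (mul y z) x = mul y (mul z x))}
        = {x | ∃ t : F, x = (algebraMap F ℍ[F,a,b] t, 0)}) ∧
    ({x : ℍ[F,a,b] × ℍ[F,a,b] |
        ((∀ y z, mul (mul x y) z = mul x (mul y z)) ∧
         (∀ y z, mul (mul y x) z = mul y (mul x z)) ∧
         (∀ y z, mul (mul y z) x = mul y (mul z x))) ∧
        (∀ y, mul x y = mul y x)}
        = {x | ∃ t : F, x = (algebraMap F ℍ[F,a,b] t, 0)}) := by
  have hc0 : c ≠ 0 := isUnit_ne_zero hc
  have hστ : ∀ t : F, star (algebraMap F ℍ[F,a,b] t) = algebraMap F ℍ[F,a,b] t := by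
    intro t; rw [coe_algebraMap]; exact star_coe t
  -- it suffices to prove the first four equalities
  suffices h : ({x : ℍ[F,a,b] × ℍ[F,a,b] | ∀ y z, mul (mul x y) z = mul x (mul y z)}
        = {x | ∃ t : F, x = (algebraMap F ℍ[F,a,b] t, 0)}) ∧
      ({x : ℍ[F,a,b] × ℍ[F,a,b] | ∀ y z, mul (mul y x) z = mul y (mul x z)}
        = {x | ∃ t : F, x = (algebraMap F ℍ[F,a,b] t, 0)}) ∧
      ({x : ℍ[F,a,b] × ℍ[F,a,b] | ∀ y z, mul (mul y z) x = mul y (mul z x)}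
        = {x | ∃ t : F, x = (algebraMap F ℍ[F,a,b] t, 0)}) ∧
      ({x : ℍ[F,a,b] × ℍ[F,a,b] | ∀ y, mul x y = mul y x}
        = {x | ∃ t : F, x = (algebraMap F ℍ[F,a,b] t, 0)}) by
    obtain ⟨h1, h2, h3, h4⟩ := h
    refine ⟨h1, h2, h3, h4, ?_, ?_⟩
    · ext x
      constructor
      · intro hx
        exact (Set.ext_iff.mp h1 x).mp hx.1
      · intro hx
        exact ⟨(Set.ext_iff.mp h1 x).mpr hx, (Set.ext_iff.mp h2 x).mpr hx,
          (Set.ext_iff.mp h3 x).mpr hx⟩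
    · ext x
      constructor
      · intro hx
        exact (Set.ext_iff.mp h4 x).mp hx.2
      · intro hx
        exact ⟨⟨(Set.ext_iff.mp h1 x).mpr hx, (Set.ext_iff.mp h2 x).mpr hx,
          (Set.ext_iff.mp h3 x).mpr hx⟩, (Set.ext_iff.mp h4 x).mpr hx⟩
  rcases hmul with rfl | rfl
  · -- caymMul case
    refine ⟨?_, ?_, ?_, ?_⟩
    · -- left nucleus
      ext ⟨u, v⟩
      simp only [Set.mem_setOf_eq]
      constructor
      · intro hx
        have key : ∀ s p : ℍ[F,a,b], star s * (c * v) * p = p * (star s * (c * v)) := by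
          intro s p
          have e := congrArg Prod.fst (hx (1, s) (p, 0))
          simp only [caymMul] at e
          simp only [star_zero, star_one, star_mul, star_star, zero_mul, mul_zero,
            add_zero, zero_add, mul_one, one_mul] at e
          linear_combination (norm := noncomm_ring) e
        have hv : v = 0 := by
          have hm : c * v = 0 := by
            refine kill hchar hD _ (fun p => by simpa using key 1 p) (fun p => ?_)
            have := key (star ⟨0,1,0,0⟩) p
            rwa [star_star] at this
          exact cancel_left hD hc0 hm
        subst hv
        have key2 : ∀ s : ℍ[F,a,b], c * s * u = u * (c * s) := by
          intro s
          have e := congrArg Prod.fst (hx (0, s) (0, 1))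
          simp only [caymMul] at e
          simp only [star_zero, star_one, star_mul, star_star, zero_mul, mul_zero,
            add_zero, zero_add, mul_one, one_mul] at e
          linear_combination (norm := noncomm_ring) e
        obtain ⟨t, ht⟩ := central_scalar' hchar hD u (central_of_cs hD hc key2)
        exact ⟨t, by rw [ht]⟩
      · rintro ⟨t, ht⟩
        rw [Prod.ext_iff] at ht
        obtain ⟨h1, h2⟩ := ht
        simp only at h1 h2
        subst h1; subst h2
        intro y z
        apply Prod.ext <;>
          simp [caymMul, hστ, star_mul, star_star, mul_assoc, mul_add, add_mul,
            QuaternionAlgebra.coe_mul_eq_smul, QuaternionAlgebra.mul_coe_eq_smul, mul_smul_comm, smul_mul_assoc]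
    · -- middle nucleus
      ext ⟨u, v⟩
      simp only [Set.mem_setOf_eq]
      constructor
      · intro hx
        have key : ∀ s p : ℍ[F,a,b], star v * c * s * p = p * (star v * c * s) := by
          intro s p
          have e := congrArg Prod.fst (hx (0, s) (p, 0))
          simp only [caymMul] at e
          simp only [star_zero, star_one, star_mul, star_star, zero_mul, mul_zero,
            add_zero, zero_add, mul_one, one_mul] at e
          linear_combination (norm := noncomm_ring) e
        have hv : v = 0 := by
          have hm : star v * c = 0 :=
            kill' hchar hD _ (fun p => by simpa using key 1 p) (fun p => key ⟨0,1,0,0⟩ p)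
          have := cancel_right hD hc0 hm
          simpa using congrArg star this
        subst hv
        have key2 : ∀ s : ℍ[F,a,b], c * s * star u = star u * (c * s) := by
          intro s
          have e := congrArg Prod.fst (hx (0, s) (0, 1))
          simp only [caymMul] at e
          simp only [star_zero, star_one, star_mul, star_star, zero_mul, mul_zero,
            add_zero, zero_add, mul_one, one_mul] at e
          linear_combination (norm := noncomm_ring) e
        obtain ⟨t, ht⟩ := central_scalar' hchar hD (star u) (central_of_cs hD hc key2)
        refine ⟨t, ?_⟩
        have := congrArg star ht
        rw [star_star, hστ] at this
        rw [this]
      · rintro ⟨t, ht⟩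
        rw [Prod.ext_iff] at ht
        obtain ⟨h1, h2⟩ := ht
        simp only at h1 h2
        subst h1; subst h2
        intro y z
        apply Prod.ext <;>
          simp [caymMul, hστ, star_mul, star_star, mul_assoc, mul_add, add_mul,
            QuaternionAlgebra.coe_mul_eq_smul, QuaternionAlgebra.mul_coe_eq_smul, mul_smul_comm, smul_mul_assoc]
    · -- right nucleus
      ext ⟨u, v⟩
      simp only [Set.mem_setOf_eq]
      constructor
      · intro hx
        have key : ∀ q r : ℍ[F,a,b], star v * c * q * r = r * (star v * c * q) := by
          intro q r
          have e := congrArg Prod.fst (hx (r, 0) (0, q))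
          simp only [caymMul] at e
          simp only [star_zero, star_one, star_mul, star_star, zero_mul, mul_zero,
            add_zero, zero_add, mul_one, one_mul] at e
          linear_combination (norm := noncomm_ring) e
        have hv : v = 0 := by
          have hm : star v * c = 0 :=
            kill' hchar hD _ (fun p => by simpa using key 1 p) (fun p => key ⟨0,1,0,0⟩ p)
          have := cancel_right hD hc0 hm
          simpa using congrArg star this
        subst hv
        have key2 : ∀ s : ℍ[F,a,b], c * s * u = u * (c * s) := by
          intro s
          have e := congrArg Prod.fst (hx (0, s) (0, 1))
          simp only [caymMul] at e
          simp only [star_zero, star_one, star_mul, star_star, zero_mul, mul_zero,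
            add_zero, zero_add, mul_one, one_mul] at e
          linear_combination (norm := noncomm_ring) e
        obtain ⟨t, ht⟩ := central_scalar' hchar hD u (central_of_cs hD hc key2)
        exact ⟨t, by rw [ht]⟩
      · rintro ⟨t, ht⟩
        rw [Prod.ext_iff] at ht
        obtain ⟨h1, h2⟩ := ht
        simp only at h1 h2
        subst h1; subst h2
        intro y z
        apply Prod.ext <;>
          simp [caymMul, hστ, star_mul, star_star, mul_assoc, mul_add, add_mul,
            QuaternionAlgebra.coe_mul_eq_smul, QuaternionAlgebra.mul_coe_eq_smul, mul_smul_comm, smul_mul_assoc]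
    · -- commuter
      ext ⟨u, v⟩
      simp only [Set.mem_setOf_eq]
      constructor
      · intro hx
        have key1 : ∀ r : ℍ[F,a,b], u * r = r * u := by
          intro r
          have e := congrArg Prod.fst (hx (r, 0))
          simp only [caymMul] at e
          simp only [star_zero, star_one, star_mul, star_star, zero_mul, mul_zero,
            add_zero, zero_add, mul_one, one_mul] at e
          linear_combination (norm := noncomm_ring) e
        have key2 : ∀ r : ℍ[F,a,b], v * star r = v * r := by
          intro r
          have e := congrArg Prod.snd (hx (r, 0))
          simp only [caymMul] at e
          simp only [star_zero, star_one, star_mul, star_star, zero_mul, mul_zero,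
            add_zero, zero_add, mul_one, one_mul] at e
          linear_combination (norm := noncomm_ring) e
        have hv : v = 0 := star_absorb hchar hD v key2
        obtain ⟨t, ht⟩ := central_scalar' hchar hD u key1
        exact ⟨t, by rw [ht, hv]⟩
      · rintro ⟨t, ht⟩
        rw [Prod.ext_iff] at ht
        obtain ⟨h1, h2⟩ := ht
        simp only at h1 h2
        subst h1; subst h2
        intro y
        apply Prod.ext <;>
          simp [caymMul, hστ, star_mul, star_star, mul_assoc, mul_add, add_mul,
            QuaternionAlgebra.coe_mul_eq_smul, QuaternionAlgebra.mul_coe_eq_smul, mul_smul_comm, smul_mul_assoc]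
  · -- cayrMul case
    refine ⟨?_, ?_, ?_, ?_⟩
    · -- left nucleus
      ext ⟨u, v⟩
      simp only [Set.mem_setOf_eq]
      constructor
      · intro hx
        have key : ∀ s p : ℍ[F,a,b], star s * (v * c) * p = p * (star s * (v * c)) := by
          intro s p
          have e := congrArg Prod.fst (hx (1, s) (p, 0))
          simp only [cayrMul] at e
          simp only [star_zero, star_one, star_mul, star_star, zero_mul, mul_zero,
            add_zero, zero_add, mul_one, one_mul] at e
          linear_combination (norm := noncomm_ring) e
        have hv : v = 0 := by
          have hm : v * c = 0 := by
            refine kill hchar hD _ (fun p => by simpa using key 1 p) (fun p => ?_)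
            have := key (star ⟨0,1,0,0⟩) p
            rwa [star_star] at this
          exact cancel_right hD hc0 hm
        subst hv
        have key2 : ∀ s : ℍ[F,a,b], s * u * c = u * (s * c) := by
          intro s
          have e := congrArg Prod.fst (hx (0, s) (0, 1))
          simp only [cayrMul] at e
          simp only [star_zero, star_one, star_mul, star_star, zero_mul, mul_zero,
            add_zero, zero_add, mul_one, one_mul] at e
          linear_combination (norm := noncomm_ring) e
        have hcomm : ∀ s : ℍ[F,a,b], u * s = s * u := by
          intro s
          have e := key2 s
          have : (s * u - u * s) * c = 0 := by
            rw [sub_mul, e]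
            noncomm_ring
          have := cancel_right hD hc0 this
          have := sub_eq_zero.mp this
          exact this.symm
        obtain ⟨t, ht⟩ := central_scalar' hchar hD u hcomm
        exact ⟨t, by rw [ht]⟩
      · rintro ⟨t, ht⟩
        rw [Prod.ext_iff] at ht
        obtain ⟨h1, h2⟩ := ht
        simp only at h1 h2
        subst h1; subst h2
        intro y z
        apply Prod.ext <;>
          simp [cayrMul, hστ, star_mul, star_star, mul_assoc, mul_add, add_mul,
            QuaternionAlgebra.coe_mul_eq_smul, QuaternionAlgebra.mul_coe_eq_smul, mul_smul_comm, smul_mul_assoc]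
    · -- middle nucleus
      ext ⟨u, v⟩
      simp only [Set.mem_setOf_eq]
      constructor
      · intro hx
        have key : ∀ s p : ℍ[F,a,b], star v * s * c * p = p * (star v * s * c) := by
          intro s p
          have e := congrArg Prod.fst (hx (0, s) (p, 0))
          simp only [cayrMul] at e
          simp only [star_zero, star_one, star_mul, star_star, zero_mul, mul_zero,
            add_zero, zero_add, mul_one, one_mul] at e
          linear_combination (norm := noncomm_ring) e
        have hv : v = 0 := by
          have := cayr_mid_kill hchar hD hc hc1 (star v) key
          simpa using congrArg star this
        subst hv
        have key2 : ∀ s : ℍ[F,a,b], s * star u * c = star u * (s * c) := by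
          intro s
          have e := congrArg Prod.fst (hx (0, s) (0, 1))
          simp only [cayrMul] at e
          simp only [star_zero, star_one, star_mul, star_star, zero_mul, mul_zero,
            add_zero, zero_add, mul_one, one_mul] at e
          linear_combination (norm := noncomm_ring) e
        have hcomm : ∀ s : ℍ[F,a,b], star u * s = s * star u := by
          intro s
          have e := key2 s
          have : (s * star u - star u * s) * c = 0 := by
            rw [sub_mul, e]
            noncomm_ring
          have := cancel_right hD hc0 this
          have := sub_eq_zero.mp this
          exact this.symm
        obtain ⟨t, ht⟩ := central_scalar' hchar hD (star u) hcomm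
        refine ⟨t, ?_⟩
        have := congrArg star ht
        rw [star_star, hστ] at this
        rw [this]
      · rintro ⟨t, ht⟩
        rw [Prod.ext_iff] at ht
        obtain ⟨h1, h2⟩ := ht
        simp only at h1 h2
        subst h1; subst h2
        intro y z
        apply Prod.ext <;>
          simp [cayrMul, hστ, star_mul, star_star, mul_assoc, mul_add, add_mul,
            QuaternionAlgebra.coe_mul_eq_smul, QuaternionAlgebra.mul_coe_eq_smul, mul_smul_comm, smul_mul_assoc]
    · -- right nucleus
      ext ⟨u, v⟩
      simp only [Set.mem_setOf_eq]
      constructor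
      · intro hx
        have key0 : ∀ q r : ℍ[F,a,b], (star v * (q * r) - r * (star v * q)) * c = 0 := by
          intro q r
          have e := congrArg Prod.fst (hx (r, 0) (0, q))
          simp only [cayrMul] at e
          simp only [star_zero, star_one, star_mul, star_star, zero_mul, mul_zero,
            add_zero, zero_add, mul_one, one_mul] at e
          linear_combination (norm := noncomm_ring) e
        have key : ∀ q r : ℍ[F,a,b], star v * q * r = r * (star v * q) := by
          intro q r
          have := cancel_right hD hc0 (key0 q r)
          have := sub_eq_zero.mp this
          rw [← this, mul_assoc]
        have hv : v = 0 := by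
          have hm : star v = 0 :=
            kill' hchar hD _ (fun p => by simpa using key 1 p) (fun p => key ⟨0,1,0,0⟩ p)
          simpa using congrArg star hm
        subst hv
        have key2 : ∀ s : ℍ[F,a,b], s * c * u = u * (s * c) := by
          intro s
          have e := congrArg Prod.fst (hx (0, s) (0, 1))
          simp only [cayrMul] at e
          simp only [star_zero, star_one, star_mul, star_star, zero_mul, mul_zero,
            add_zero, zero_add, mul_one, one_mul] at e
          linear_combination (norm := noncomm_ring) e
        have hcu : c * u = u * c := by
          have := key2 1
          simpa using this
        have hcomm : ∀ s : ℍ[F,a,b], u * s = s * u := by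
          intro s
          have e := key2 s
          have : (s * u - u * s) * c = 0 := by
            rw [sub_mul]
            have e2 : s * u * c = u * (s * c) := by
              rw [mul_assoc s u c, ← hcu, ← mul_assoc]
              exact e
            rw [e2]
            noncomm_ring
          have := cancel_right hD hc0 this
          have := sub_eq_zero.mp this
          exact this.symm
        obtain ⟨t, ht⟩ := central_scalar' hchar hD u hcomm
        exact ⟨t, by rw [ht]⟩
      · rintro ⟨t, ht⟩
        rw [Prod.ext_iff] at ht
        obtain ⟨h1, h2⟩ := ht
        simp only at h1 h2
        subst h1; subst h2
        intro y z
        apply Prod.ext <;>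
          simp [cayrMul, hστ, star_mul, star_star, mul_assoc, mul_add, add_mul,
            QuaternionAlgebra.coe_mul_eq_smul, QuaternionAlgebra.mul_coe_eq_smul, mul_smul_comm, smul_mul_assoc]
    · -- commuter
      ext ⟨u, v⟩
      simp only [Set.mem_setOf_eq]
      constructor
      · intro hx
        have key1 : ∀ r : ℍ[F,a,b], u * r = r * u := by
          intro r
          have e := congrArg Prod.fst (hx (r, 0))
          simp only [cayrMul] at e
          simp only [star_zero, star_one, star_mul, star_star, zero_mul, mul_zero,
            add_zero, zero_add, mul_one, one_mul] at e
          linear_combination (norm := noncomm_ring) e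
        have key2 : ∀ r : ℍ[F,a,b], v * star r = v * r := by
          intro r
          have e := congrArg Prod.snd (hx (r, 0))
          simp only [cayrMul] at e
          simp only [star_zero, star_one, star_mul, star_star, zero_mul, mul_zero,
            add_zero, zero_add, mul_one, one_mul] at e
          linear_combination (norm := noncomm_ring) e
        have hv : v = 0 := star_absorb hchar hD v key2
        obtain ⟨t, ht⟩ := central_scalar' hchar hD u key1
        exact ⟨t, by rw [ht, hv]⟩
      · rintro ⟨t, ht⟩
        rw [Prod.ext_iff] at ht
        obtain ⟨h1, h2⟩ := ht
        simp only at h1 h2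
        subst h1; subst h2
        intro y
        apply Prod.ext <;>
          simp [cayrMul, hστ, star_mul, star_star, mul_assoc, mul_add, add_mul,
            QuaternionAlgebra.coe_mul_eq_smul, QuaternionAlgebra.mul_coe_eq_smul, mul_smul_comm, smul_mul_assoc]
end

section
/- Let F be a field of characteristic ≠ 2, let D be a quaternion division algebra over F, let c ∈ D be invertible with c ∉ F·1, and set A = Cay(D,c). For any e, f ∈ Fˣ, if φ : (e,f)_F → A is an injective unital F-algebra homomorphism (an injective F-linear map with φ(xy) = φ(x)φ(y) and φ(1) = (1,0)), then the image of φ equals D × {0}; in particular D ≅ (e,f)_F, and D × {0} is the only quaternion subalgebra of A. -/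
open Quaternion

lemma aux_star_mul_self {F : Type*} [Field F] {a b : F} (u : ℍ[F,a,b]) :
    ∃ n : F, star u * u = (n : ℍ[F,a,b]) := by
  refine ⟨(star u * u).re, ?_⟩
  ext <;> simp <;> ring

/-- If `D` is a quaternion division algebra over a field `F` of characteristic ≠ 2,
`c ∈ D` is invertible with `c ∉ F·1`, and `φ : (e,f)_F → Cay(D,c)` is an injective
unital `F`-algebra homomorphism from a quaternion algebra `(e,f)_F`, then the image
of `φ` is `D × {0}`; in particular `(e,f)_F ≅ D`, and `D × {0}` is the only quaternion
subalgebra of `Cay(D,c)`. -/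
theorem stmt_3 {F : Type*} [Field F] (hchar : (2 : F) ≠ 0) {a b : F}
    (hD : ∀ x y : ℍ[F,a,b], x * y = 0 → x = 0 ∨ y = 0)
    (c : ℍ[F,a,b]) (hc : IsUnit c)
    (hc1 : ∀ t : F, c ≠ algebraMap F ℍ[F,a,b] t)
    (e f : Fˣ)
    (φ : ℍ[F,(e : F),(f : F)] →ₗ[F] ℍ[F,a,b] × ℍ[F,a,b])
    (hinj : Function.Injective φ)
    (hone : φ 1 = (1, 0))
    (hmul : ∀ x y : ℍ[F,(e : F),(f : F)], φ (x * y) = cayMul c (φ x) (φ y)) :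
    Set.range φ = {p : ℍ[F,a,b] × ℍ[F,a,b] | p.2 = 0} ∧
    Nonempty (ℍ[F,(e : F),(f : F)] ≃ₐ[F] ℍ[F,a,b]) := by
  have hcoe : ∀ t : F, (t : ℍ[F,a,b]) = t • (1 : ℍ[F,a,b]) := by
    intro t
    rw [← QuaternionAlgebra.coe_algebraMap, Algebra.algebraMap_eq_smul_one]
  -- key: squares to a scalar implies second component zero
  have key : ∀ (x : ℍ[F,(e : F),(f : F)]) (t : F),
      x * x = algebraMap F _ t → (φ x).2 = 0 := by
    intro x t hx
    set u := (φ x).1 with hu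
    set v := (φ x).2 with hv
    by_contra hv0
    have h1 : φ (x * x) = t • φ 1 := by
      rw [hx, Algebra.algebraMap_eq_smul_one, map_smul]
    rw [hmul, hone] at h1
    have hfst : u * u + c * (star v * v) = t • (1 : ℍ[F,a,b]) := by
      have := congrArg Prod.fst h1
      simpa [cayMul, ← hu, ← hv] using this
    have hsnd : v * u + v * star u = 0 := by
      have := congrArg Prod.snd h1
      simpa [cayMul, ← hu, ← hv] using this
    have htr : u + star u = 0 := by
      rw [← mul_add] at hsnd
      rcases hD _ _ hsnd with h | h
      · exact absurd h hv0
      · exact h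
    have hre : u.re = 0 := by
      rw [QuaternionAlgebra.self_add_star'] at htr
      have h2 : (2 : F) * u.re = 0 := QuaternionAlgebra.coe_injective (by simpa using htr)
      rcases mul_eq_zero.mp h2 with h | h
      · exact absurd h hchar
      · exact h
    have hstaru : star u = -u := eq_neg_of_add_eq_zero_right htr
    obtain ⟨n, hn⟩ := aux_star_mul_self u
    obtain ⟨m, hm⟩ := aux_star_mul_self v
    have huu : u * u = ((-n : F) : ℍ[F,a,b]) := by
      rw [← neg_neg (u * u), ← neg_mul, ← hstaru, hn]
      push_cast
      ring
    have hm0 : m ≠ 0 := by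
      intro h
      rcases hD (star v) v (by rw [hm, h]; simp) with h' | h'
      · exact hv0 (by simpa using congrArg star h')
      · exact hv0 h'
    have hcm : c * (m : ℍ[F,a,b]) = ((t + n : F) : ℍ[F,a,b]) := by
      have h2 : c * (star v * v) = t • (1 : ℍ[F,a,b]) - u * u := by
        rw [← hfst]; abel
      rw [hm] at h2
      rw [h2, huu, hcoe (-n), hcoe (t + n)]
      module
    apply hc1 ((t + n) * m⁻¹)
    rw [QuaternionAlgebra.coe_algebraMap]
    calc c = c * ((m : ℍ[F,a,b]) * ((m⁻¹ : F) : ℍ[F,a,b])) := by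
              rw [← QuaternionAlgebra.coe_mul, mul_inv_cancel₀ hm0]; simp
      _ = (((t + n) * m⁻¹ : F) : ℍ[F,a,b]) := by
          rw [← mul_assoc, hcm, ← QuaternionAlgebra.coe_mul]
  -- basis elements
  have hi2 : (φ ⟨0,1,0,0⟩).2 = 0 := key ⟨0,1,0,0⟩ e (by
    rw [QuaternionAlgebra.coe_algebraMap]; ext <;> simp)
  have hj2 : (φ ⟨0,0,1,0⟩).2 = 0 := key ⟨0,0,1,0⟩ f (by
    rw [QuaternionAlgebra.coe_algebraMap]; ext <;> simp)
  have hk2 : (φ ⟨0,0,0,1⟩).2 = 0 := key ⟨0,0,0,1⟩ (-(e * f)) (by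
    rw [QuaternionAlgebra.coe_algebraMap]; ext <;> simp)
  have hdecomp : ∀ x : ℍ[F,(e : F),(f : F)],
      x = x.re • 1 + x.imI • (⟨0,1,0,0⟩ : ℍ[F,(e : F),(f : F)]) + x.imJ • ⟨0,0,1,0⟩
        + x.imK • ⟨0,0,0,1⟩ := by
    intro x
    ext <;> simp [smul_eq_mul]
  have hsnd : ∀ x : ℍ[F,(e : F),(f : F)], (φ x).2 = 0 := by
    intro x
    have hφx : φ x = x.re • φ 1 + x.imI • φ ⟨0,1,0,0⟩ + x.imJ • φ ⟨0,0,1,0⟩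
        + x.imK • φ ⟨0,0,0,1⟩ := by
      conv_lhs => rw [hdecomp x]
      rw [map_add, map_add, map_add, map_smul, map_smul, map_smul, map_smul]
    rw [hφx]
    simp [hone, hi2, hj2, hk2]
  -- the first-component map
  set ψ : ℍ[F,(e : F),(f : F)] →ₗ[F] ℍ[F,a,b] := (LinearMap.fst F _ _).comp φ with hψ
  have hψinj : Function.Injective ψ := by
    intro x y h
    apply hinj
    exact Prod.ext h (by rw [hsnd x, hsnd y])
  have hψsurj : Function.Surjective ψ := by
    rw [← LinearMap.injective_iff_surjective_of_finrank_eq_finrank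
      (by rw [QuaternionAlgebra.finrank_eq_four, QuaternionAlgebra.finrank_eq_four])]
    exact hψinj
  constructor
  · ext p
    constructor
    · rintro ⟨x, rfl⟩
      exact hsnd x
    · intro hp
      obtain ⟨x, hx⟩ := hψsurj p.1
      exact ⟨x, Prod.ext hx (by rw [hsnd x]; exact hp.symm)⟩
  · refine ⟨AlgEquiv.ofLinearEquiv (LinearEquiv.ofBijective ψ ⟨hψinj, hψsurj⟩) ?_ ?_⟩
    · show ψ 1 = 1
      simp [hψ, hone]
    · intro x y
      show ψ (x * y) = ψ x * ψ y
      simp only [hψ, LinearMap.comp_apply, LinearMap.fst_apply, hmul, cayMul]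
      rw [hsnd x, hsnd y]
      simp
end

section
/- Let F be a field of characteristic ≠ 2, let D be a quaternion division algebra over F, let c ∈ D be invertible with c ∉ F·1, and set A = Cay_m(D,c) or A = Cay_r(D,c). For any e, f ∈ Fˣ, if φ : (e,f)_F → A is an injective unital F-algebra homomorphism, then the image of φ equals D × {0}; in particular D ≅ (e,f)_F, and D × {0} is the only quaternion subalgebra of A. -/
open Quaternion

section Aux
variable {F : Type*} [Field F] {a b : F}

lemma key2 (hD : ∀ x y : ℍ[F,a,b], x * y = 0 → x = 0 ∨ y = 0)
    {c : ℍ[F,a,b]} (hc1 : ∀ t : F, c ≠ algebraMap F ℍ[F,a,b] t)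
    {u v : ℍ[F,a,b]} (hv : v ≠ 0) (htr : u + star u = 0)
    {S : ℍ[F,a,b]} (hS : S = star v * (c * v) ∨ S = (star v * v) * c)
    {t : F} (h1 : u * u + S = (t : ℍ[F,a,b])) : False := by
  have hsu : star u = -u := by
    have := neg_eq_of_add_eq_zero_right htr
    rw [← this]
  set r : F := (star u * u).re with hr
  have h3 : u * u = -((r : F) : ℍ[F,a,b]) := by
    have h4 : star u * u = ((r : F) : ℍ[F,a,b]) := QuaternionAlgebra.star_mul_eq_coe u
    rw [hsu, neg_mul, neg_eq_iff_eq_neg] at h4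
    exact h4
  have hSval : S = ((t + r : F) : ℍ[F,a,b]) := by
    rw [QuaternionAlgebra.coe_add, ← sub_neg_eq_add, ← h3]
    exact eq_sub_of_add_eq' h1
  set s : F := t + r with hs
  have hconj : ∀ m : F, m ≠ 0 → (m : ℍ[F,a,b]) * c = (s : ℍ[F,a,b]) → False := by
    intro m hm hmc
    have : c = ((m⁻¹ * s : F) : ℍ[F,a,b]) := by
      rw [QuaternionAlgebra.coe_mul, ← hmc, ← mul_assoc, ← QuaternionAlgebra.coe_mul,
        inv_mul_cancel₀ hm, QuaternionAlgebra.coe_one, one_mul]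
    exact hc1 (m⁻¹ * s) this
  rcases hS with rfl | rfl
  · have hm : v * star v = (((v * star v).re : F) : ℍ[F,a,b]) :=
      QuaternionAlgebra.mul_star_eq_coe v
    set m : F := (v * star v).re with hmdef
    have hm0 : m ≠ 0 := by
      intro h0
      rw [h0, QuaternionAlgebra.coe_zero] at hm
      rcases hD _ _ hm with h' | h'
      · exact hv h'
      · exact hv (star_eq_zero.mp h')
    have hzero : ((m : ℍ[F,a,b]) * c - (s : ℍ[F,a,b])) * v = 0 := by
      rw [sub_mul, mul_assoc, ← hm, mul_assoc, hSval, QuaternionAlgebra.coe_commutes, sub_self]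
    rcases hD _ _ hzero with h' | h'
    · exact hconj m hm0 (by rwa [sub_eq_zero] at h')
    · exact hv h'
  · have hn : star v * v = (((star v * v).re : F) : ℍ[F,a,b]) :=
      QuaternionAlgebra.star_mul_eq_coe v
    set n : F := (star v * v).re with hndef
    have hn0 : n ≠ 0 := by
      intro h0
      rw [h0, QuaternionAlgebra.coe_zero] at hn
      rcases hD _ _ hn with h' | h'
      · exact hv (star_eq_zero.mp h')
      · exact hv h'
    refine hconj n hn0 ?_
    rw [← hSval, hn, QuaternionAlgebra.coe_commutes]
end Aux

/-- If `D` is a quaternion division algebra over a field `F` of characteristic ≠ 2,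
`c ∈ D` is invertible with `c ∉ F·1`, `A = Cay_m(D,c)` or `A = Cay_r(D,c)`, and
`φ : (e,f)_F → A` is an injective unital `F`-algebra homomorphism from a quaternion
algebra `(e,f)_F`, then the image of `φ` is `D × {0}`; in particular `(e,f)_F ≅ D`,
and `D × {0}` is the only quaternion subalgebra of `A`. -/
theorem stmt_4 {F : Type*} [Field F] (hchar : (2 : F) ≠ 0) {a b : F}
    (hD : ∀ x y : ℍ[F,a,b], x * y = 0 → x = 0 ∨ y = 0)
    (c : ℍ[F,a,b]) (hc : IsUnit c)
    (hc1 : ∀ t : F, c ≠ algebraMap F ℍ[F,a,b] t)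
    (mul : (ℍ[F,a,b] × ℍ[F,a,b]) → (ℍ[F,a,b] × ℍ[F,a,b]) → ℍ[F,a,b] × ℍ[F,a,b])
    (hAmul : mul = caymMul c ∨ mul = cayrMul c)
    (e f : Fˣ)
    (φ : ℍ[F,(e : F),(f : F)] →ₗ[F] ℍ[F,a,b] × ℍ[F,a,b])
    (hinj : Function.Injective φ)
    (hone : φ 1 = (1, 0))
    (hmul : ∀ x y : ℍ[F,(e : F),(f : F)], φ (x * y) = mul (φ x) (φ y)) :
    Set.range φ = {p : ℍ[F,a,b] × ℍ[F,a,b] | p.2 = 0} ∧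
    Nonempty (ℍ[F,(e : F),(f : F)] ≃ₐ[F] ℍ[F,a,b]) := by
  have hφcoe : ∀ t : F, φ ((t : F) : ℍ[F,(e : F),(f : F)]) = (((t : F) : ℍ[F,a,b]), 0) := by
    intro t
    have h1 : ((t : F) : ℍ[F,(e : F),(f : F)]) = t • 1 := by
      rw [← Algebra.algebraMap_eq_smul_one]; rfl
    have h2 : ((t : F) : ℍ[F,a,b]) = t • 1 := by
      rw [← Algebra.algebraMap_eq_smul_one]; rfl
    rw [h1, map_smul, hone, h2, Prod.smul_mk, smul_zero]
  -- key : if x² is a scalar, then the second component of φ x vanishes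
  have hkey : ∀ (x : ℍ[F,(e : F),(f : F)]) (t : F),
      x * x = ((t : F) : ℍ[F,(e : F),(f : F)]) → (φ x).2 = 0 := by
    intro x t hx
    have hφx : mul (φ x) (φ x) = (((t : F) : ℍ[F,a,b]), 0) := by
      rw [← hmul, hx, hφcoe]
    by_cases hv : (φ x).2 = 0
    · exact hv
    exfalso
    set u := (φ x).1
    set v := (φ x).2
    have hp : φ x = (u, v) := rfl
    have h2 : v * u + v * star u = 0 := by
      rcases hAmul with rfl | rfl
      · have := congrArg Prod.snd hφx
        simpa [caymMul] using this
      · have := congrArg Prod.snd hφx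
        simpa [cayrMul] using this
    have h2' : v * (u + star u) = 0 := by rw [mul_add]; exact h2
    rcases hD _ _ h2' with h' | htr
    · exact hv h'
    rcases hAmul with rfl | rfl
    · have h1 : u * u + star v * (c * v) = ((t : F) : ℍ[F,a,b]) := by
        have := congrArg Prod.fst hφx
        simpa [caymMul] using this
      exact key2 hD hc1 hv htr (Or.inl rfl) h1
    · have h1 : u * u + (star v * v) * c = ((t : F) : ℍ[F,a,b]) := by
        have := congrArg Prod.fst hφx
        simpa [cayrMul] using this
      exact key2 hD hc1 hv htr (Or.inr rfl) h1
  -- basis elements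
  set iQ : ℍ[F,(e : F),(f : F)] := ⟨0, 1, 0, 0⟩ with hiQ
  set jQ : ℍ[F,(e : F),(f : F)] := ⟨0, 0, 1, 0⟩ with hjQ
  set kQ : ℍ[F,(e : F),(f : F)] := ⟨0, 0, 0, 1⟩ with hkQ
  have hii : iQ * iQ = (((e : F) : F) : ℍ[F,(e : F),(f : F)]) := by
    ext <;> simp [hiQ]
  have hjj : jQ * jQ = (((f : F) : F) : ℍ[F,(e : F),(f : F)]) := by
    ext <;> simp [hjQ]
  have hij : iQ * jQ = kQ := by
    ext <;> simp [hiQ, hjQ, hkQ]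
  have hi0 : (φ iQ).2 = 0 := hkey iQ (e : F) hii
  have hj0 : (φ jQ).2 = 0 := hkey jQ (f : F) hjj
  have hk0 : (φ kQ).2 = 0 := by
    rw [← hij, hmul]
    rcases hAmul with rfl | rfl
    · simp [caymMul, hi0, hj0]
    · simp [cayrMul, hi0, hj0]
  have h10 : (φ 1).2 = 0 := by rw [hone]
  -- every element has vanishing second component
  have hsnd : ∀ x : ℍ[F,(e : F),(f : F)], (φ x).2 = 0 := by
    intro x
    have hx : x = x.re • 1 + x.imI • iQ + x.imJ • jQ + x.imK • kQ := by
      ext <;> simp [hiQ, hjQ, hkQ]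
    rw [hx, map_add, map_add, map_add, map_smul, map_smul, map_smul, map_smul]
    simp [h10, hi0, hj0, hk0]
  -- the first-component map
  set ψ : ℍ[F,(e : F),(f : F)] →ₗ[F] ℍ[F,a,b] :=
    (LinearMap.fst F ℍ[F,a,b] ℍ[F,a,b]).comp φ with hψ
  have hφψ : ∀ x, φ x = (ψ x, 0) := fun x => Prod.ext rfl (hsnd x)
  have hψinj : Function.Injective ψ := by
    intro x y h
    apply hinj
    rw [hφψ x, hφψ y, h]
  have hψsurj : Function.Surjective ψ := by
    have hfr : Module.finrank F ℍ[F,(e : F),(f : F)] = Module.finrank F ℍ[F,a,b] := by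
      rw [QuaternionAlgebra.finrank_eq_four, QuaternionAlgebra.finrank_eq_four]
    exact (LinearMap.injective_iff_surjective_of_finrank_eq_finrank hfr).mp hψinj
  constructor
  · ext p
    simp only [Set.mem_range, Set.mem_setOf_eq]
    constructor
    · rintro ⟨x, rfl⟩; exact hsnd x
    · intro hp
      obtain ⟨x, hx⟩ := hψsurj p.1
      exact ⟨x, by rw [hφψ x, hx]; exact Prod.ext rfl hp.symm⟩
  · have hψone : ψ 1 = 1 := by
      have : ψ 1 = (φ 1).1 := rfl
      rw [this, hone]
    have hψmul : ∀ x y, ψ (x * y) = ψ x * ψ y := by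
      intro x y
      have h := hmul x y
      rw [hφψ x, hφψ y] at h
      have h' : ψ (x * y) = (φ (x * y)).1 := rfl
      rw [h', h]
      rcases hAmul with rfl | rfl
      · simp [caymMul]
      · simp [cayrMul]
    exact ⟨AlgEquiv.ofBijective (AlgHom.ofLinearMap ψ hψone hψmul) ⟨hψinj, hψsurj⟩⟩
end

section
/- Let F be a field of characteristic ≠ 2, let D be a quaternion division algebra over F, and let c ∈ D be invertible with c ∉ F·1. Then each of the three Dickson algebras Cay(D,c), Cay_m(D,c) and Cay_r(D,c) is a division algebra, i.e., it has no zero divisors: if (u,v)(u',v') = (0,0) then (u,v) = (0,0) or (u',v') = (0,0). -/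
open Quaternion

open Quaternion QuaternionAlgebra

section Aux

variable {F : Type*} [Field F] {a b : F}

private lemma my_cancel_r (hD : ∀ x y : ℍ[F,a,b], x * y = 0 → x = 0 ∨ y = 0)
    {x y z : ℍ[F,a,b]} (hx : x ≠ 0) (h : y * x = z * x) : y = z := by
  have h0 : (y - z) * x = 0 := by rw [sub_mul, h, sub_self]
  rcases hD _ _ h0 with h' | h'
  · exact sub_eq_zero.mp h'
  · exact absurd h' hx

private lemma my_cancel_l (hD : ∀ x y : ℍ[F,a,b], x * y = 0 → x = 0 ∨ y = 0)
    {x y z : ℍ[F,a,b]} (hx : x ≠ 0) (h : x * y = x * z) : y = z := by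
  have h0 : x * (y - z) = 0 := by rw [mul_sub, h, sub_self]
  rcases hD _ _ h0 with h' | h'
  · exact absurd h' hx
  · exact sub_eq_zero.mp h'

private lemma my_norm_ne (hD : ∀ x y : ℍ[F,a,b], x * y = 0 → x = 0 ∨ y = 0)
    {v : ℍ[F,a,b]} (hv : v ≠ 0) : ((v * star v).re : F) ≠ 0 := by
  intro h0
  have h : v * star v = 0 := by
    rw [QuaternionAlgebra.mul_star_eq_coe, h0]
    exact QuaternionAlgebra.coe_zero
  rcases hD _ _ h with h' | h'
  · exact hv h'
  · exact hv (star_eq_zero.mp h')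

/-- Generic case analysis for the Cayley–Dickson doubling. -/
private lemma my_cases (hD : ∀ x y : ℍ[F,a,b], x * y = 0 → x = 0 ∨ y = 0)
    (E : ℍ[F,a,b] → ℍ[F,a,b] → ℍ[F,a,b])
    (hE0 : ∀ w v, E w v = 0 → w = 0 ∨ v = 0)
    (hEw0 : ∀ w, E w 0 = 0)
    (hE0v : ∀ v, E 0 v = 0)
    (hkey : ∀ u v u' v' : ℍ[F,a,b], u ≠ 0 → v ≠ 0 → v' ≠ 0 →
      u * u' + E (star v') v = 0 → v' * u + v * star u' = 0 → False)
    (u v u' v' : ℍ[F,a,b])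
    (h1 : u * u' + E (star v') v = 0) (h2 : v' * u + v * star u' = 0) :
    (u = 0 ∧ v = 0) ∨ (u' = 0 ∧ v' = 0) := by
  by_cases hu : u = 0
  · by_cases hv : v = 0
    · exact Or.inl ⟨hu, hv⟩
    · subst hu
      right
      rw [mul_zero, zero_add] at h2
      have hu' : u' = 0 := by
        rcases hD _ _ h2 with h' | h'
        · exact absurd h' hv
        · exact star_eq_zero.mp h'
      refine ⟨hu', ?_⟩
      rw [zero_mul, zero_add] at h1
      rcases hE0 _ _ h1 with h' | h'
      · exact star_eq_zero.mp h'
      · exact absurd h' hv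
  · right
    by_cases hv : v = 0
    · subst hv
      have hv' : v' = 0 := by
        rw [zero_mul, add_zero] at h2
        rcases hD _ _ h2 with h' | h'
        · exact h'
        · exact absurd h' hu
      subst hv'
      refine ⟨?_, rfl⟩
      rw [hEw0, add_zero] at h1
      rcases hD _ _ h1 with h' | h'
      · exact absurd h' hu
      · exact h'
    · by_cases hv' : v' = 0
      · subst hv'
        refine ⟨?_, rfl⟩
        rw [star_zero, hE0v, add_zero] at h1
        rcases hD _ _ h1 with h' | h'
        · exact absurd h' hu
        · exact h'
      · exact absurd h2 fun h2 => (hkey u v u' v' hu hv hv' h1 h2).elim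

/-- common step: from the second equation derive `u * (u' * star v) = -(↑nu * star v')`. -/
private lemma my_step (u v u' v' : ℍ[F,a,b])
    (h2 : v' * u + v * star u' = 0) :
    u * u' * star v = -((((u * star u).re : F) : ℍ[F,a,b]) * star v') := by
  have h2s : star u * star v' + u' * star v = 0 := by
    have := congrArg star h2
    simpa [star_add, star_mul] using this
  have h3 : u' * star v = -(star u * star v') := by linear_combination (norm := noncomm_ring) h2s
  calc u * u' * star v = u * (u' * star v) := by rw [mul_assoc]
    _ = -(u * star u * star v') := by rw [h3]; noncomm_ring
    _ = -((((u * star u).re : F) : ℍ[F,a,b]) * star v') := by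
        rw [← QuaternionAlgebra.mul_star_eq_coe]

private lemma my_coe_ne {r : F} (hr : r ≠ 0) : ((r : ℍ[F,a,b])) ≠ 0 := by
  rwa [ne_eq, ← QuaternionAlgebra.coe_zero, QuaternionAlgebra.coe_inj]

/-- final common step: `↑nu = ↑nv * c` gives a contradiction. -/
private lemma my_tail (hD : ∀ x y : ℍ[F,a,b], x * y = 0 → x = 0 ∨ y = 0)
    {c : ℍ[F,a,b]} (hc1 : ∀ t : F, c ≠ algebraMap F ℍ[F,a,b] t)
    {nu nv : F} (hnv : nv ≠ 0)
    (h : ((nu : ℍ[F,a,b])) = (nv : ℍ[F,a,b]) * c) : False := by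
  apply hc1 (nu / nv)
  have : (nv : ℍ[F,a,b]) * c = (nv : ℍ[F,a,b]) * ((nu / nv : F) : ℍ[F,a,b]) := by
    rw [← h, ← QuaternionAlgebra.coe_mul, QuaternionAlgebra.coe_inj]
    field_simp
  exact my_cancel_l hD (my_coe_ne hnv) this

private lemma my_key_cay (hD : ∀ x y : ℍ[F,a,b], x * y = 0 → x = 0 ∨ y = 0)
    {c : ℍ[F,a,b]} (hc1 : ∀ t : F, c ≠ algebraMap F ℍ[F,a,b] t)
    (u v u' v' : ℍ[F,a,b]) (hu : u ≠ 0) (hv : v ≠ 0) (hv' : v' ≠ 0)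
    (h1 : u * u' + c * (star v' * v) = 0) (h2 : v' * u + v * star u' = 0) : False := by
  set nu := ((u * star u).re : F) with hnu
  set nv := ((v * star v).re : F) with hnv
  have hv2 : v * star v = (nv : ℍ[F,a,b]) := QuaternionAlgebra.mul_star_eq_coe v
  have hs := my_step u v u' v' h2
  have h1' : u * u' = -(c * (star v' * v)) := by linear_combination (norm := noncomm_ring) h1
  have key : ((nu : ℍ[F,a,b])) * star v' = ((nv : ℍ[F,a,b]) * c) * star v' := by
    have : -(((nu : ℍ[F,a,b])) * star v') = -(c * (star v' * (v * star v))) := by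
      rw [← hs, h1']; noncomm_ring
    rw [hv2] at this
    have h4 := neg_injective this
    have hcom : ∀ x : ℍ[F,a,b], x * ((nv : F) : ℍ[F,a,b]) = ((nv : F) : ℍ[F,a,b]) * x :=
      fun x => (QuaternionAlgebra.coe_commutes nv x).symm
    calc ((nu : F) : ℍ[F,a,b]) * star v' = c * (star v' * ((nv : F) : ℍ[F,a,b])) := h4
      _ = c * (((nv : F) : ℍ[F,a,b]) * star v') := by rw [hcom]
      _ = (c * ((nv : F) : ℍ[F,a,b])) * star v' := by rw [mul_assoc]
      _ = (((nv : F) : ℍ[F,a,b]) * c) * star v' := by rw [hcom]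
  have := my_cancel_r hD (star_ne_zero.mpr hv') key
  exact my_tail hD hc1 (my_norm_ne hD hv) this


private lemma my_key_caym (hD : ∀ x y : ℍ[F,a,b], x * y = 0 → x = 0 ∨ y = 0)
    {c : ℍ[F,a,b]} (hc1 : ∀ t : F, c ≠ algebraMap F ℍ[F,a,b] t)
    (u v u' v' : ℍ[F,a,b]) (hu : u ≠ 0) (hv : v ≠ 0) (hv' : v' ≠ 0)
    (h1 : u * u' + star v' * (c * v) = 0) (h2 : v' * u + v * star u' = 0) : False := by
  set nu := ((u * star u).re : F) with hnu
  set nv := ((v * star v).re : F) with hnv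
  have hv2 : v * star v = (nv : ℍ[F,a,b]) := QuaternionAlgebra.mul_star_eq_coe v
  have hs := my_step u v u' v' h2
  have h1' : u * u' = -(star v' * (c * v)) := by linear_combination (norm := noncomm_ring) h1
  have hcom : ∀ (r : F) (x : ℍ[F,a,b]), x * (r : ℍ[F,a,b]) = (r : ℍ[F,a,b]) * x :=
    fun r x => (QuaternionAlgebra.coe_commutes r x).symm
  have key : star v' * ((nu : F) : ℍ[F,a,b]) = star v' * (((nv : F) : ℍ[F,a,b]) * c) := by
    have h3 : -(((nu : F) : ℍ[F,a,b]) * star v') = -(star v' * (c * (v * star v))) := by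
      rw [← hs, h1']; noncomm_ring
    rw [hv2] at h3
    have h4 := neg_injective h3
    calc star v' * ((nu : F) : ℍ[F,a,b]) = ((nu : F) : ℍ[F,a,b]) * star v' := by rw [hcom]
      _ = star v' * (c * ((nv : F) : ℍ[F,a,b])) := h4
      _ = star v' * (((nv : F) : ℍ[F,a,b]) * c) := by rw [hcom]
  have := my_cancel_l hD (star_ne_zero.mpr hv') key
  exact my_tail hD hc1 (my_norm_ne hD hv) this

private lemma my_key_cayr (hD : ∀ x y : ℍ[F,a,b], x * y = 0 → x = 0 ∨ y = 0)
    {c : ℍ[F,a,b]} (hc1 : ∀ t : F, c ≠ algebraMap F ℍ[F,a,b] t)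
    (u v u' v' : ℍ[F,a,b]) (hu : u ≠ 0) (hv : v ≠ 0) (hv' : v' ≠ 0)
    (h1 : u * u' + (star v' * v) * c = 0) (h2 : v' * u + v * star u' = 0) : False := by
  set nu := ((u * star u).re : F) with hnu
  set nv := ((v * star v).re : F) with hnv
  have hu2 : u * star u = (nu : ℍ[F,a,b]) := QuaternionAlgebra.mul_star_eq_coe u
  have hv2 : v * star v = (nv : ℍ[F,a,b]) := QuaternionAlgebra.mul_star_eq_coe v
  have hsv : star v * v = ((nv : F) : ℍ[F,a,b]) := by rw [star_comm_self', hv2]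
  have hcom : ∀ (r : F) (x : ℍ[F,a,b]), x * (r : ℍ[F,a,b]) = (r : ℍ[F,a,b]) * x :=
    fun r x => (QuaternionAlgebra.coe_commutes r x).symm
  have h1' : u * u' = -((star v' * v) * c) := by linear_combination (norm := noncomm_ring) h1
  have h2' : v' * u = -(v * star u') := by linear_combination (norm := noncomm_ring) h2
  -- first: ↑nu = v * star c * star v
  have key1 : ((nu : F) : ℍ[F,a,b]) * v' = (v * star c * star v) * v' := by
    have h3 : v' * (u * star u) = -(v * star (u * u')) := by
      rw [← mul_assoc, h2', star_mul]; noncomm_ring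
    rw [hu2, h1', star_neg, star_mul, star_mul, star_star] at h3
    calc ((nu : F) : ℍ[F,a,b]) * v' = v' * ((nu : F) : ℍ[F,a,b]) := by rw [hcom]
      _ = (v * star c * star v) * v' := by rw [h3]; noncomm_ring
  have key2 : ((nu : F) : ℍ[F,a,b]) = v * star c * star v :=
    my_cancel_r hD hv' key1
  have hnv0 : nv ≠ 0 := my_norm_ne hD hv
  -- then: ↑(nv*nv) * star c = ↑(nu*nv)
  have key3 : (((nv * nv : F)) : ℍ[F,a,b]) * star c = (((nu * nv : F)) : ℍ[F,a,b]) := by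
    have h5 : star v * (((nu : F) : ℍ[F,a,b]) * v) = star v * ((v * star c * star v) * v) := by
      rw [key2]
    calc (((nv * nv : F)) : ℍ[F,a,b]) * star c
        = ((nv : F) : ℍ[F,a,b]) * star c * ((nv : F) : ℍ[F,a,b]) := by
          rw [QuaternionAlgebra.coe_mul, mul_assoc, QuaternionAlgebra.coe_commutes nv (star c), mul_assoc,
            ← mul_assoc, ← mul_assoc, QuaternionAlgebra.coe_commutes nv (star c)]
      _ = (star v * v) * star c * (star v * v) := by rw [hsv]
      _ = star v * ((v * star c * star v) * v) := by noncomm_ring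
      _ = star v * (((nu : F) : ℍ[F,a,b]) * v) := h5.symm
      _ = ((nu : F) : ℍ[F,a,b]) * (star v * v) := by
          rw [← mul_assoc, hcom nu (star v), mul_assoc]
      _ = (((nu * nv : F)) : ℍ[F,a,b]) := by rw [hsv, QuaternionAlgebra.coe_mul]
  have hnn : ((nv * nv : F)) ≠ 0 := mul_ne_zero hnv0 hnv0
  have key4 : star c = (((nu / nv : F)) : ℍ[F,a,b]) := by
    apply my_cancel_l hD (my_coe_ne (a := a) (b := b) hnn)
    rw [key3, ← QuaternionAlgebra.coe_mul, QuaternionAlgebra.coe_inj]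
    field_simp
  apply hc1 (nu / nv)
  have := congrArg star key4
  rwa [star_star, QuaternionAlgebra.star_coe] at this

end Aux

theorem stmt_6' {F : Type*} [Field F] (hchar : (2 : F) ≠ 0) {a b : F}
    (hD : ∀ x y : ℍ[F,a,b], x * y = 0 → x = 0 ∨ y = 0)
    (c : ℍ[F,a,b]) (hc : IsUnit c)
    (hc1 : ∀ t : F, c ≠ algebraMap F ℍ[F,a,b] t) :
    (∀ x y : ℍ[F,a,b] × ℍ[F,a,b], cayMul c x y = 0 → x = 0 ∨ y = 0) ∧
    (∀ x y : ℍ[F,a,b] × ℍ[F,a,b], caymMul c x y = 0 → x = 0 ∨ y = 0) ∧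
    (∀ x y : ℍ[F,a,b] × ℍ[F,a,b], cayrMul c x y = 0 → x = 0 ∨ y = 0) := by
  have hc0 : c ≠ 0 := by
    intro h
    exact hc1 0 (by simp [h])
  refine ⟨?_, ?_, ?_⟩
  · rintro ⟨u, v⟩ ⟨u', v'⟩ hxy
    have h1 := congrArg Prod.fst hxy
    have h2 := congrArg Prod.snd hxy
    simp only [cayMul] at h1 h2
    rcases my_cases hD (fun w v => c * (w * v))
      (fun w v h => by
        rcases hD _ _ h with h' | h'
        · exact absurd h' hc0
        · exact hD _ _ h')
      (fun w => by simp) (fun v => by simp)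
      (fun u v u' v' hu hv hv' h1 h2 => my_key_cay hD hc1 u v u' v' hu hv hv' h1 h2)
      u v u' v' h1 h2 with ⟨h, h'⟩ | ⟨h, h'⟩
    · left; simp [h, h', Prod.ext_iff]
    · right; simp [h, h', Prod.ext_iff]
  · rintro ⟨u, v⟩ ⟨u', v'⟩ hxy
    have h1 := congrArg Prod.fst hxy
    have h2 := congrArg Prod.snd hxy
    simp only [caymMul] at h1 h2
    rcases my_cases hD (fun w v => w * (c * v))
      (fun w v h => by
        rcases hD _ _ h with h' | h'
        · exact Or.inl h'
        · rcases hD _ _ h' with h'' | h''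
          · exact absurd h'' hc0
          · exact Or.inr h'')
      (fun w => by simp) (fun v => by simp)
      (fun u v u' v' hu hv hv' h1 h2 => my_key_caym hD hc1 u v u' v' hu hv hv' h1 h2)
      u v u' v' h1 h2 with ⟨h, h'⟩ | ⟨h, h'⟩
    · left; simp [h, h', Prod.ext_iff]
    · right; simp [h, h', Prod.ext_iff]
  · rintro ⟨u, v⟩ ⟨u', v'⟩ hxy
    have h1 := congrArg Prod.fst hxy
    have h2 := congrArg Prod.snd hxy
    simp only [cayrMul] at h1 h2
    rcases my_cases hD (fun w v => (w * v) * c)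
      (fun w v h => by
        rcases hD _ _ h with h' | h'
        · exact hD _ _ h'
        · exact absurd h' hc0)
      (fun w => by simp) (fun v => by simp)
      (fun u v u' v' hu hv hv' h1 h2 => my_key_cayr hD hc1 u v u' v' hu hv hv' h1 h2)
      u v u' v' h1 h2 with ⟨h, h'⟩ | ⟨h, h'⟩
    · left; simp [h, h', Prod.ext_iff]
    · right; simp [h, h', Prod.ext_iff]

/-- If `D` is a quaternion division algebra over a field `F` of characteristic ≠ 2 and
`c ∈ D` is invertible with `c ∉ F·1`, then each of the Dickson algebras `Cay(D,c)`,
`Cay_m(D,c)` and `Cay_r(D,c)` has no zero divisors, i.e. is a division algebra. -/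
theorem stmt_6 {F : Type*} [Field F] (hchar : (2 : F) ≠ 0) {a b : F}
    (hD : ∀ x y : ℍ[F,a,b], x * y = 0 → x = 0 ∨ y = 0)
    (c : ℍ[F,a,b]) (hc : IsUnit c)
    (hc1 : ∀ t : F, c ≠ algebraMap F ℍ[F,a,b] t) :
    (∀ x y : ℍ[F,a,b] × ℍ[F,a,b], cayMul c x y = 0 → x = 0 ∨ y = 0) ∧
    (∀ x y : ℍ[F,a,b] × ℍ[F,a,b], caymMul c x y = 0 → x = 0 ∨ y = 0) ∧
    (∀ x y : ℍ[F,a,b] × ℍ[F,a,b], cayrMul c x y = 0 → x = 0 ∨ y = 0) := by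
  exact stmt_6' hchar hD c hc hc1
end

section
/- Let F be a field of characteristic ≠ 2, let D and B be quaternion algebras over F, let c ∈ D be invertible with c ∉ F·1, let g : D → B be a unital F-algebra isomorphism and m ∈ Fˣ. Then the F-linear map G : D ⊕ D → B ⊕ B, G((u,v)) = (g(u), m⁻¹g(v)), is a unital F-algebra isomorphism Cay(D,c) → Cay(B, m²g(c)), and likewise an isomorphism Cay_m(D,c) → Cay_m(B, m²g(c)) and Cay_r(D,c) → Cay_r(B, m²g(c)). -/
open Quaternion

lemma gcoe {F : Type*} [Field F] {a b a' b' : F} (g : ℍ[F,a,b] ≃ₐ[F] ℍ[F,a',b'])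
    (t : F) : g (t : ℍ[F,a,b]) = (t : ℍ[F,a',b']) := by
  have := g.commutes t
  simpa [QuaternionAlgebra.coe_algebraMap] using this

lemma gstar {F : Type*} [Field F] {a b a' b' : F} (g : ℍ[F,a,b] ≃ₐ[F] ℍ[F,a',b'])
    (x : ℍ[F,a,b]) : g (star x) = star (g x) := by
  have hsx : star x = ((2 * x.re : F) : ℍ[F,a,b]) - x :=
    eq_sub_of_add_eq (by rw [QuaternionAlgebra.star_add_self', zero_mul, add_zero])
  have hsgx : star (g x) = ((2 * (g x).re : F) : ℍ[F,a',b']) - g x :=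
    eq_sub_of_add_eq (by rw [QuaternionAlgebra.star_add_self', zero_mul, add_zero])
  have key : (2 * x.re : F) = 2 * (g x).re := by
    by_cases hx : ∃ t : F, x = (t : ℍ[F,a,b])
    · obtain ⟨t, rfl⟩ := hx
      rw [gcoe]; simp
    · push_neg at hx
      set y := g x with hy
      have hyns : ∀ t : F, y ≠ (t : ℍ[F,a',b']) := by
        intro t ht
        have := congrArg g.symm ht
        rw [hy, g.symm_apply_apply, gcoe] at this
        exact hx t this
      have h2 : (((x * star x).re : F) : ℍ[F,a',b'])
          = y * ((2 * x.re : F) : ℍ[F,a',b']) - y * y := by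
        rw [← gcoe g, ← QuaternionAlgebra.mul_star_eq_coe, map_mul, hsx, map_sub, gcoe,
          mul_sub, hy]
      have e1 : y * ((2 * x.re : F) : ℍ[F,a',b'])
          = y * y + (((x * star x).re : F) : ℍ[F,a',b']) := by
        rw [h2]; abel
      have h1 : y * ((2 * y.re : F) : ℍ[F,a',b']) - y * y
          = (((y * star y).re : F) : ℍ[F,a',b']) := by
        rw [← mul_sub, ← hsgx]; exact QuaternionAlgebra.mul_star_eq_coe y
      have e2 : y * ((2 * y.re : F) : ℍ[F,a',b'])
          = y * y + (((y * star y).re : F) : ℍ[F,a',b']) := by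
        rw [← h1]; abel
      have e3 : y * ((2 * x.re - 2 * y.re : F) : ℍ[F,a',b'])
          = (((x * star x).re - (y * star y).re : F) : ℍ[F,a',b']) := by
        rw [QuaternionAlgebra.coe_sub, QuaternionAlgebra.coe_sub, mul_sub, e1, e2]; abel
      by_contra hne
      have hk : (2 * x.re - 2 * y.re : F) ≠ 0 := sub_ne_zero.mpr hne
      apply hyns (((x * star x).re - (y * star y).re) * (2 * x.re - 2 * y.re)⁻¹)
      have := congrArg (· * (((2 * x.re - 2 * y.re : F)⁻¹ : F) : ℍ[F,a',b'])) e3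
      simp only [mul_assoc, ← QuaternionAlgebra.coe_mul] at this
      rw [mul_inv_cancel₀ hk] at this
      simpa using this
  rw [hsx, map_sub, gcoe, key, hsgx]

/-- If `g : D → B` is an isomorphism of quaternion algebras over `F` (char ≠ 2), `c ∈ D`
is invertible with `c ∉ F·1` and `m ∈ Fˣ`, then `G((u,v)) = (g(u), m⁻¹g(v))` is a unital
`F`-algebra isomorphism `Cay(D,c) → Cay(B, m²g(c))`, `Cay_m(D,c) → Cay_m(B, m²g(c))`
and `Cay_r(D,c) → Cay_r(B, m²g(c))`. -/
theorem stmt_7 {F : Type*} [Field F] (hchar : (2 : F) ≠ 0) {a b a' b' : F}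
    (c : ℍ[F,a,b]) (hc : IsUnit c)
    (hc1 : ∀ t : F, c ≠ algebraMap F ℍ[F,a,b] t)
    (g : ℍ[F,a,b] ≃ₐ[F] ℍ[F,a',b']) (m : Fˣ)
    (G : ℍ[F,a,b] × ℍ[F,a,b] → ℍ[F,a',b'] × ℍ[F,a',b'])
    (hG : G = fun x => (g x.1, ((m : F)⁻¹) • g x.2)) :
    IsLinearMap F G ∧ Function.Bijective G ∧ G (1, 0) = (1, 0) ∧
    (∀ x y, G (cayMul c x y) = cayMul (((m : F) ^ 2) • g c) (G x) (G y)) ∧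
    (∀ x y, G (caymMul c x y) = caymMul (((m : F) ^ 2) • g c) (G x) (G y)) ∧
    (∀ x y, G (cayrMul c x y) = cayrMul (((m : F) ^ 2) • g c) (G x) (G y)) := by
  subst hG
  have hm : (m : F) ≠ 0 := m.ne_zero
  refine ⟨⟨?_, ?_⟩, ?_, ?_, ?_, ?_, ?_⟩
  · intro x y; simp [Prod.ext_iff, smul_add]
  · intro r x
    refine Prod.ext ?_ ?_
    · show g (r • x.1) = r • g x.1
      exact map_smul g r x.1
    · show (m : F)⁻¹ • g (r • x.2) = r • ((m : F)⁻¹ • g x.2)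
      rw [map_smul, smul_comm]
  · constructor
    · intro x y hxy
      simp only [Prod.mk.injEq] at hxy
      have h1 : x.1 = y.1 := g.injective hxy.1
      have h2 : g x.2 = g y.2 := by
        have := congrArg (fun z => (m : F) • z) hxy.2
        simpa [smul_smul, mul_inv_cancel₀ hm] using this
      exact Prod.ext h1 (g.injective h2)
    · intro y
      refine ⟨(g.symm y.1, g.symm ((m : F) • y.2)), Prod.ext ?_ ?_⟩
      · exact g.apply_symm_apply y.1
      · show (m : F)⁻¹ • g (g.symm ((m : F) • y.2)) = y.2
        rw [g.apply_symm_apply, smul_smul, inv_mul_cancel₀ hm, one_smul]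
  · simp
  all_goals {
    intro x y
    simp only [cayMul, caymMul, cayrMul, Prod.mk.injEq, map_add, map_mul, gstar,
      QuaternionAlgebra.star_smul, smul_mul_assoc, mul_smul_comm, smul_smul, smul_add]
    constructor <;> first | trivial | (match_scalars <;> (first | trivial | (field_simp; try ring)))
  }
end

section
/- Let F be a field of characteristic ≠ 2, let D and B be quaternion division algebras over F, let c ∈ D be invertible with c ∉ F·1 and d ∈ B be invertible with d ∉ F·1. If there exists a unital F-algebra isomorphism Cay(D,c) ≅ Cay(B,d), or Cay_m(D,c) ≅ Cay_m(B,d), or Cay_r(D,c) ≅ Cay_r(B,d), then D and B are isomorphic as F-algebras. -/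
open Quaternion

namespace Stmt8Aux

variable {F : Type*} [Field F] {a b : F}

lemma star_mul_self'' (v : ℍ[F,a,b]) :
    star v * v = (((star v * v).re : F) : ℍ[F,a,b]) := by
  ext <;>
    simp [QuaternionAlgebra.re_mul, QuaternionAlgebra.imI_mul, QuaternionAlgebra.imJ_mul,
      QuaternionAlgebra.imK_mul] <;> ring

lemma mul_star_self'' (v : ℍ[F,a,b]) :
    v * star v = (((star v * v).re : F) : ℍ[F,a,b]) := by
  ext <;>
    simp [QuaternionAlgebra.re_mul, QuaternionAlgebra.imI_mul, QuaternionAlgebra.imJ_mul,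
      QuaternionAlgebra.imK_mul] <;> ring

lemma sq_eq' (u : ℍ[F,a,b]) :
    u * u = (2 * u.re) • u +
      (a * u.imI ^ 2 + b * u.imJ ^ 2 - a * b * u.imK ^ 2 - u.re ^ 2) • 1 := by
  ext <;>
    simp [QuaternionAlgebra.re_mul, QuaternionAlgebra.imI_mul, QuaternionAlgebra.imJ_mul,
      QuaternionAlgebra.imK_mul] <;> ring

lemma norm_re_ne_zero (hD : ∀ x y : ℍ[F,a,b], x * y = 0 → x = 0 ∨ y = 0)
    {v : ℍ[F,a,b]} (hv : v ≠ 0) : (star v * v).re ≠ 0 := by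
  intro h0
  have : star v * v = 0 := by
    rw [star_mul_self'' v, h0, QuaternionAlgebra.coe_zero]
  rcases hD _ _ this with h | h
  · exact hv (by simpa using h)
  · exact hv h

/-- generic doubled multiplication with twist `T` -/
def mulT (T : ℍ[F,a,b] → ℍ[F,a,b] → ℍ[F,a,b]) (x y : ℍ[F,a,b] × ℍ[F,a,b]) :
    ℍ[F,a,b] × ℍ[F,a,b] :=
  (x.1 * y.1 + T x.2 y.2, y.2 * x.1 + x.2 * star y.1)

lemma key (T : ℍ[F,a,b] → ℍ[F,a,b] → ℍ[F,a,b]) (hT0 : T 0 0 = 0)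
    (hT : ∀ v : ℍ[F,a,b], v ≠ 0 → ∀ μ : F, T v v ≠ (μ : ℍ[F,a,b]))
    (x : ℍ[F,a,b] × ℍ[F,a,b]) :
    (∃ α β : F, mulT T x x = α • x + β • ((1, 0) : ℍ[F,a,b] × ℍ[F,a,b])) ↔ x.2 = 0 := by
  constructor
  · rintro ⟨α, β, h⟩
    by_contra hv
    have h2 : x.2 * x.1 + x.2 * star x.1 = α • x.2 := by
      have := congrArg Prod.snd h
      simpa [mulT] using this
    have h2' : x.2 * ((2 * x.1.re : F) : ℍ[F,a,b]) = α • x.2 := by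
      have hs := QuaternionAlgebra.self_add_star' x.1; rw [zero_mul, add_zero] at hs
      rw [← hs, mul_add]; exact h2
    have hα : α = 2 * x.1.re := by
      rw [QuaternionAlgebra.mul_coe_eq_smul] at h2'
      have : (2 * x.1.re - α) • x.2 = 0 := by rw [sub_smul, h2', sub_self]
      rcases smul_eq_zero.mp this with h' | h'
      · exact (sub_eq_zero.mp h').symm
      · exact absurd h' hv
    have h1 : x.1 * x.1 + T x.2 x.2 = α • x.1 + β • 1 := by
      have := congrArg Prod.fst h
      simpa [mulT] using this
    set m : F := a * x.1.imI ^ 2 + b * x.1.imJ ^ 2 - a * b * x.1.imK ^ 2 - x.1.re ^ 2 with hm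
    have hcoe : ((β - m : F) : ℍ[F,a,b]) = (β - m) • (1 : ℍ[F,a,b]) := by
      rw [← QuaternionAlgebra.coe_one, QuaternionAlgebra.smul_coe, mul_one]
    refine hT x.2 hv (β - m) ?_
    have hTv : T x.2 x.2 = (α • x.1 + β • 1) - x.1 * x.1 :=
      eq_sub_of_add_eq (by rw [add_comm]; exact h1)
    rw [hTv, hcoe, sq_eq' x.1, hα, ← hm]
    module
  · intro h2
    refine ⟨2 * x.1.re,
      a * x.1.imI ^ 2 + b * x.1.imJ ^ 2 - a * b * x.1.imK ^ 2 - x.1.re ^ 2, ?_⟩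
    have : mulT T x x = (x.1 * x.1, 0) := by
      simp [mulT, h2, hT0]
    rw [this, Prod.ext_iff]
    constructor
    · simp [sq_eq', Prod.smul_def, h2]
    · simp [h2]



section Twists

variable (hD : ∀ x y : ℍ[F,a,b], x * y = 0 → x = 0 ∨ y = 0)
  (c : ℍ[F,a,b]) (hc1 : ∀ t : F, c ≠ algebraMap F ℍ[F,a,b] t)

lemma coe_eq_algebraMap (t : F) : ((t : ℍ[F,a,b]) : ℍ[F,a,b]) = algebraMap F ℍ[F,a,b] t := by
  rw [QuaternionAlgebra.coe_algebraMap]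

include hD hc1 in
lemma hT_cay : ∀ v : ℍ[F,a,b], v ≠ 0 → ∀ μ : F,
    c * (star v * v) ≠ (μ : ℍ[F,a,b]) := by
  intro v hv μ h
  set n : F := (star v * v).re with hn
  have hn0 : n ≠ 0 := norm_re_ne_zero hD hv
  rw [star_mul_self'' v, ← hn, QuaternionAlgebra.mul_coe_eq_smul] at h
  have : c = (n⁻¹ * μ : F) • (1 : ℍ[F,a,b]) := by
    rw [← QuaternionAlgebra.coe_one, QuaternionAlgebra.smul_coe, mul_one]
    calc c = n⁻¹ • (n • c) := by rw [smul_smul, inv_mul_cancel₀ hn0, one_smul]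
    _ = n⁻¹ • ((μ : ℍ[F,a,b])) := by rw [h]
    _ = ((n⁻¹ * μ : F) : ℍ[F,a,b]) := by rw [QuaternionAlgebra.smul_coe]
  exact hc1 (n⁻¹ * μ) (by
    rw [this, Algebra.algebraMap_eq_smul_one])

include hD hc1 in
lemma hT_cayr : ∀ v : ℍ[F,a,b], v ≠ 0 → ∀ μ : F,
    (star v * v) * c ≠ (μ : ℍ[F,a,b]) := by
  intro v hv μ h
  refine hT_cay hD c hc1 v hv μ ?_
  rw [star_mul_self'' v, QuaternionAlgebra.coe_mul_eq_smul] at h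
  rw [star_mul_self'' v, QuaternionAlgebra.mul_coe_eq_smul]
  exact h

include hD hc1 in
lemma hT_caym : ∀ v : ℍ[F,a,b], v ≠ 0 → ∀ μ : F,
    star v * (c * v) ≠ (μ : ℍ[F,a,b]) := by
  intro v hv μ h
  set n : F := (star v * v).re with hn
  have hn0 : n ≠ 0 := norm_re_ne_zero hD hv
  -- multiply on the left by v and on the right by star v
  have h2 : v * (star v * (c * v)) * star v = v * (μ : ℍ[F,a,b]) * star v := by rw [h]
  have lhs : v * (star v * (c * v)) * star v = (n * n) • c := by
    calc v * (star v * (c * v)) * star v = (v * star v) * c * (v * star v) := by noncomm_ring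
    _ = ((n : ℍ[F,a,b])) * c * ((n : ℍ[F,a,b])) := by rw [mul_star_self'' v, ← hn]
    _ = (n * n) • c := by
        rw [QuaternionAlgebra.coe_mul_eq_smul, QuaternionAlgebra.mul_coe_eq_smul, smul_smul]
  have rhs : v * (μ : ℍ[F,a,b]) * star v = ((μ * n : F) : ℍ[F,a,b]) := by
    calc v * (μ : ℍ[F,a,b]) * star v = (μ : ℍ[F,a,b]) * (v * star v) := by
          rw [QuaternionAlgebra.mul_coe_eq_smul, QuaternionAlgebra.coe_mul_eq_smul, smul_mul_assoc]
    _ = ((μ : ℍ[F,a,b])) * ((n : ℍ[F,a,b])) := by rw [mul_star_self'' v, ← hn]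
    _ = ((μ * n : F) : ℍ[F,a,b]) := by rw [QuaternionAlgebra.coe_mul]
  have hnn : (n * n : F) ≠ 0 := mul_ne_zero hn0 hn0
  have : c = ((n * n)⁻¹ * (μ * n) : F) • (1 : ℍ[F,a,b]) := by
    rw [← QuaternionAlgebra.coe_one, QuaternionAlgebra.smul_coe, mul_one]
    calc c = (n * n)⁻¹ • ((n * n) • c) := by rw [smul_smul, inv_mul_cancel₀ hnn, one_smul]
    _ = (n * n)⁻¹ • ((μ * n : F) : ℍ[F,a,b]) := by rw [← lhs, h2, rhs]
    _ = (((n * n)⁻¹ * (μ * n) : F) : ℍ[F,a,b]) := by rw [QuaternionAlgebra.smul_coe]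
  exact hc1 ((n * n)⁻¹ * (μ * n)) (by rw [this, Algebra.algebraMap_eq_smul_one])

end Twists


lemma main_aux {a' b' : F}
    (TD : ℍ[F,a,b] → ℍ[F,a,b] → ℍ[F,a,b])
    (TB : ℍ[F,a',b'] → ℍ[F,a',b'] → ℍ[F,a',b'])
    (hTD0 : TD 0 0 = 0)
    (hTD : ∀ v : ℍ[F,a,b], v ≠ 0 → ∀ μ : F, TD v v ≠ (μ : ℍ[F,a,b]))
    (hTB0 : TB 0 0 = 0)
    (hTB : ∀ v : ℍ[F,a',b'], v ≠ 0 → ∀ μ : F, TB v v ≠ (μ : ℍ[F,a',b']))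
    (G : (ℍ[F,a,b] × ℍ[F,a,b]) ≃ₗ[F] ℍ[F,a',b'] × ℍ[F,a',b'])
    (hG1 : G (1, 0) = (1, 0))
    (hGm : ∀ x y, G (mulT TD x y) = mulT TB (G x) (G y)) :
    Nonempty (ℍ[F,a,b] ≃ₐ[F] ℍ[F,a',b']) := by
  have hGm' : ∀ X Y, G.symm (mulT TB X Y) = mulT TD (G.symm X) (G.symm Y) := by
    intro X Y
    apply G.injective
    rw [G.apply_symm_apply, hGm, G.apply_symm_apply, G.apply_symm_apply]
  have hG1' : G.symm ((1, 0) : ℍ[F,a',b'] × ℍ[F,a',b']) = (1, 0) := by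
    apply G.injective
    rw [G.apply_symm_apply, hG1]
  have hsnd : ∀ u : ℍ[F,a,b], (G (u, 0)).2 = 0 := by
    intro u
    obtain ⟨α, β, hab⟩ := (key TD hTD0 hTD ((u, 0))).mpr rfl
    refine (key TB hTB0 hTB (G (u, 0))).mp ⟨α, β, ?_⟩
    rw [← hGm, hab, map_add, map_smul, map_smul, hG1]
  set f : ℍ[F,a,b] → ℍ[F,a',b'] := fun u => (G (u, 0)).1 with hf
  have hGu : ∀ u : ℍ[F,a,b], G (u, 0) = (f u, 0) := by
    intro u
    exact Prod.ext_iff.mpr ⟨rfl, hsnd u⟩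
  have hmulD : ∀ u u' : ℍ[F,a,b], mulT TD (u, 0) (u', 0) = (u * u', 0) := by
    intro u u'; simp [mulT, hTD0]
  have hmulB : ∀ w w' : ℍ[F,a',b'], mulT TB (w, 0) (w', 0) = (w * w', 0) := by
    intro w w'; simp [mulT, hTB0]
  have hfmul : ∀ u u', f (u * u') = f u * f u' := by
    intro u u'
    have h := hGm (u, 0) (u', 0)
    rw [hmulD, hGu u, hGu u', hmulB, hGu (u * u')] at h
    exact congrArg Prod.fst h
  have hfone : f 1 = 1 := congrArg Prod.fst hG1
  have hfadd : ∀ u u', f (u + u') = f u + f u' := by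
    intro u u'
    have h : ((u + u', 0) : ℍ[F,a,b] × ℍ[F,a,b]) = (u, 0) + (u', 0) := by simp
    simp only [hf, h, map_add]; rfl
  have hfsmul : ∀ (r : F) (u : ℍ[F,a,b]), f (r • u) = r • f u := by
    intro r u
    have h : ((r • u, 0) : ℍ[F,a,b] × ℍ[F,a,b]) = r • (u, 0) := by simp
    simp only [hf, h, map_smul]; rfl
  have hfzero : f 0 = 0 := by
    have h : ((0, 0) : ℍ[F,a,b] × ℍ[F,a,b]) = 0 := rfl
    simp only [hf, h, map_zero]; rfl
  let φ : ℍ[F,a,b] →ₐ[F] ℍ[F,a',b'] :=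
    { toFun := f
      map_one' := hfone
      map_mul' := hfmul
      map_zero' := hfzero
      map_add' := hfadd
      commutes' := fun r => by
        show f (algebraMap F ℍ[F,a,b] r) = algebraMap F ℍ[F,a',b'] r
        rw [Algebra.algebraMap_eq_smul_one, Algebra.algebraMap_eq_smul_one, hfsmul, hfone] }
  have hinj : Function.Injective φ := by
    intro u u' h
    have h2 : G (u, 0) = G (u', 0) := by
      rw [hGu u, hGu u']
      exact congrArg (fun w => (w, (0 : ℍ[F,a',b']))) h
    have := G.injective h2
    exact congrArg Prod.fst this
  have hsurj : Function.Surjective φ := by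
    intro w
    have hx2 : (G.symm (w, 0)).2 = 0 := by
      obtain ⟨α, β, hab⟩ := (key TB hTB0 hTB ((w, 0))).mpr rfl
      refine (key TD hTD0 hTD (G.symm (w, 0))).mp ⟨α, β, ?_⟩
      rw [← hGm', hab, map_add, map_smul, map_smul, hG1']
    have hx : ((G.symm (w, 0)).1, (0 : ℍ[F,a,b])) = G.symm (w, 0) :=
      Prod.ext_iff.mpr ⟨rfl, hx2.symm⟩
    refine ⟨(G.symm (w, 0)).1, ?_⟩
    show f _ = w
    rw [hf]
    simp only
    rw [hx, G.apply_symm_apply]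
  exact ⟨AlgEquiv.ofBijective φ ⟨hinj, hsurj⟩⟩

end Stmt8Aux


/-- If `D`, `B` are quaternion division algebras over a field `F` of characteristic ≠ 2,
`c ∈ D`, `d ∈ B` invertible and not in `F·1`, and `Cay(D,c) ≅ Cay(B,d)`, or
`Cay_m(D,c) ≅ Cay_m(B,d)`, or `Cay_r(D,c) ≅ Cay_r(B,d)` as unital `F`-algebras,
then `D ≅ B` as `F`-algebras. -/
theorem stmt_8 {F : Type*} [Field F] (hchar : (2 : F) ≠ 0) {a b a' b' : F}
    (hD : ∀ x y : ℍ[F,a,b], x * y = 0 → x = 0 ∨ y = 0)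
    (hB : ∀ x y : ℍ[F,a',b'], x * y = 0 → x = 0 ∨ y = 0)
    (c : ℍ[F,a,b]) (hc : IsUnit c)
    (hc1 : ∀ t : F, c ≠ algebraMap F ℍ[F,a,b] t)
    (d : ℍ[F,a',b']) (hd : IsUnit d)
    (hd1 : ∀ t : F, d ≠ algebraMap F ℍ[F,a',b'] t)
    (hiso :
      (∃ G : (ℍ[F,a,b] × ℍ[F,a,b]) ≃ₗ[F] ℍ[F,a',b'] × ℍ[F,a',b'],
        G (1, 0) = (1, 0) ∧ ∀ x y, G (cayMul c x y) = cayMul d (G x) (G y)) ∨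
      (∃ G : (ℍ[F,a,b] × ℍ[F,a,b]) ≃ₗ[F] ℍ[F,a',b'] × ℍ[F,a',b'],
        G (1, 0) = (1, 0) ∧ ∀ x y, G (caymMul c x y) = caymMul d (G x) (G y)) ∨
      (∃ G : (ℍ[F,a,b] × ℍ[F,a,b]) ≃ₗ[F] ℍ[F,a',b'] × ℍ[F,a',b'],
        G (1, 0) = (1, 0) ∧ ∀ x y, G (cayrMul c x y) = cayrMul d (G x) (G y))) :
    Nonempty (ℍ[F,a,b] ≃ₐ[F] ℍ[F,a',b']) := by
  rcases hiso with ⟨G, hG1, hGm⟩ | ⟨G, hG1, hGm⟩ | ⟨G, hG1, hGm⟩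
  · exact Stmt8Aux.main_aux (fun v w => c * (star w * v)) (fun v w => d * (star w * v))
      (by simp) (Stmt8Aux.hT_cay hD c hc1) (by simp) (Stmt8Aux.hT_cay hB d hd1) G hG1 hGm
  · exact Stmt8Aux.main_aux (fun v w => star w * (c * v)) (fun v w => star w * (d * v))
      (by simp) (Stmt8Aux.hT_caym hD c hc1) (by simp) (Stmt8Aux.hT_caym hB d hd1) G hG1 hGm
  · exact Stmt8Aux.main_aux (fun v w => (star w * v) * c) (fun v w => (star w * v) * d)
      (by simp) (Stmt8Aux.hT_cayr hD c hc1) (by simp) (Stmt8Aux.hT_cayr hB d hd1) G hG1 hGm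
end

section
/- Let F be a field of characteristic ≠ 2 and D a quaternion division algebra over F. Let w ∈ D with w ∉ F·1 and w² = α·1 for some α ∈ Fˣ, set L = F·1 + F·w, and let c, d ∈ L with c, d ∉ F·1. Then there is no unital F-algebra isomorphism Cay(D,c) → Cay_r(D,d), no unital F-algebra isomorphism Cay_m(D,c) → Cay(D,d), and no unital F-algebra isomorphism Cay_m(D,c) → Cay_r(D,d). -/
open Quaternion

/-- Membership in the quadratic subfield `L = F·1 + F·w` of a quaternion algebra. -/
def memL {F : Type*} [Field F] {a b : F} (w x : ℍ[F,a,b]) : Prop :=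
  ∃ p q : F, x = algebraMap F ℍ[F,a,b] p + algebraMap F ℍ[F,a,b] q * w

namespace Stmt13Aux
variable {F : Type*} [Field F] {a b : F}

def nrm (x : ℍ[F,a,b]) : F :=
  x.re*x.re - a*x.imI*x.imI - b*x.imJ*x.imJ + a*b*x.imK*x.imK

theorem star_mul_self' (x : ℍ[F,a,b]) : star x * x = algebraMap F ℍ[F,a,b] (nrm x) := by
  rw [QuaternionAlgebra.coe_algebraMap, nrm]; ext <;> simp <;> ring

theorem mul_star_self' (x : ℍ[F,a,b]) : x * star x = algebraMap F ℍ[F,a,b] (nrm x) := by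
  rw [QuaternionAlgebra.coe_algebraMap, nrm]; ext <;> simp <;> ring

theorem alg_re (t : F) : (algebraMap F ℍ[F,a,b] t).re = t := by
  rw [QuaternionAlgebra.coe_algebraMap]; simp

theorem alg_ne_zero {t : F} (ht : t ≠ 0) : algebraMap F ℍ[F,a,b] t ≠ 0 := by
  intro h
  exact ht (by simpa [alg_re] using congrArg QuaternionAlgebra.re h)

theorem nrm_ne_zero (hD : ∀ x y : ℍ[F,a,b], x * y = 0 → x = 0 ∨ y = 0)
    {x : ℍ[F,a,b]} (hx : x ≠ 0) : nrm x ≠ 0 := by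
  intro h
  have h0 : star x * x = 0 := by rw [star_mul_self', h, map_zero]
  rcases hD _ _ h0 with h1 | h1
  · exact hx (by simpa using congrArg star h1)
  · exact hx h1

theorem nrm_eq_zero (hD : ∀ x y : ℍ[F,a,b], x * y = 0 → x = 0 ∨ y = 0)
    {x : ℍ[F,a,b]} (hx : nrm x = 0) : x = 0 := by
  by_contra h; exact nrm_ne_zero hD h hx

theorem cancel_left (hD : ∀ x y : ℍ[F,a,b], x * y = 0 → x = 0 ∨ y = 0)
    {s x y : ℍ[F,a,b]} (hs : s ≠ 0) (h : s * x = s * y) : x = y := by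
  have h0 : s * (x - y) = 0 := by rw [mul_sub, h, sub_self]
  rcases hD _ _ h0 with h1 | h1
  · exact absurd h1 hs
  · exact sub_eq_zero.mp h1

/-- basis quaternions -/
def qi : ℍ[F,a,b] := ⟨0,1,0,0⟩
def qj : ℍ[F,a,b] := ⟨0,0,1,0⟩
def qk : ℍ[F,a,b] := ⟨0,0,0,1⟩

theorem qi_mul_qj : (qi : ℍ[F,a,b]) * qj = qk := by
  rw [qi, qj, qk]; ext <;> simp

theorem star_qi : star (qi : ℍ[F,a,b]) = -qi := by rw [qi]; ext <;> simp
theorem star_qj : star (qj : ℍ[F,a,b]) = -qj := by rw [qj]; ext <;> simp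
theorem star_qk : star (qk : ℍ[F,a,b]) = -qk := by rw [qk]; ext <;> simp
theorem qi_ne_zero : (qi : ℍ[F,a,b]) ≠ 0 := by
  intro h; simpa [qi] using congrArg QuaternionAlgebra.imI h
theorem qj_ne_zero : (qj : ℍ[F,a,b]) ≠ 0 := by
  intro h; simpa [qj] using congrArg QuaternionAlgebra.imJ h
theorem qk_ne_zero : (qk : ℍ[F,a,b]) ≠ 0 := by
  intro h; simpa [qk] using congrArg QuaternionAlgebra.imK h

theorem a_ne_zero (hD : ∀ x y : ℍ[F,a,b], x * y = 0 → x = 0 ∨ y = 0) : a ≠ 0 := by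
  intro ha
  have : (qi : ℍ[F,a,b]) * qi = 0 := by rw [qi]; ext <;> simp [ha]
  rcases hD _ _ this with h | h <;> exact qi_ne_zero h

theorem b_ne_zero (hD : ∀ x y : ℍ[F,a,b], x * y = 0 → x = 0 ∨ y = 0) : b ≠ 0 := by
  intro hb
  have : (qj : ℍ[F,a,b]) * qj = 0 := by rw [qj]; ext <;> simp [hb]
  rcases hD _ _ this with h | h <;> exact qj_ne_zero h

/-- commuting with qi and qj forces scalar -/
theorem central_eq (h2 : (2:F) ≠ 0) (ha : a ≠ 0) (hb : b ≠ 0) (z : ℍ[F,a,b])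
    (hi : z * qi = qi * z) (hj : z * qj = qj * z) :
    z = algebraMap F ℍ[F,a,b] z.re := by
  have e1 := congrArg QuaternionAlgebra.imJ hi
  have e2 := congrArg QuaternionAlgebra.imK hi
  have e3 := congrArg QuaternionAlgebra.imK hj
  simp [qi, qj] at e1 e2 e3
  have hK : z.imK = 0 := by
    rcases mul_eq_zero.mp (show (2:F) * (a * z.imK) = 0 by linear_combination -e1) with h | h
    · exact absurd h h2
    · rcases mul_eq_zero.mp h with h' | h'
      · exact absurd h' ha
      · exact h'
  have hJ : z.imJ = 0 := by
    rcases mul_eq_zero.mp (show (2:F) * z.imJ = 0 by linear_combination -e2) with h | h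
    · exact absurd h h2
    · exact h
  have hI : z.imI = 0 := by
    rcases mul_eq_zero.mp (show (2:F) * z.imI = 0 by linear_combination e3) with h | h
    · exact absurd h h2
    · exact h
  rw [QuaternionAlgebra.coe_algebraMap]
  ext <;> simp [hI, hJ, hK]

/-- star x = x forces scalar -/
theorem star_eq_self (h2 : (2:F) ≠ 0) (x : ℍ[F,a,b]) (h : star x = x) :
    x = algebraMap F ℍ[F,a,b] x.re := by
  have e1 := congrArg QuaternionAlgebra.imI h
  have e2 := congrArg QuaternionAlgebra.imJ h
  have e3 := congrArg QuaternionAlgebra.imK h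
  simp at e1 e2 e3
  have hI : x.imI = 0 := by
    rcases mul_eq_zero.mp (show (2:F) * x.imI = 0 by linear_combination -e1) with h | h
    · exact absurd h h2
    · exact h
  have hJ : x.imJ = 0 := by
    rcases mul_eq_zero.mp (show (2:F) * x.imJ = 0 by linear_combination -e2) with h | h
    · exact absurd h h2
    · exact h
  have hK : x.imK = 0 := by
    rcases mul_eq_zero.mp (show (2:F) * x.imK = 0 by linear_combination -e3) with h | h
    · exact absurd h h2
    · exact h
  rw [QuaternionAlgebra.coe_algebraMap]
  ext <;> simp [hI, hJ, hK]

-- shape lemmas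
theorem cay_a (e u : ℍ[F,a,b]) (y) : cayMul e (u,0) y = (u*y.1, y.2*u) := by simp [cayMul]
theorem cay_b (e : ℍ[F,a,b]) (x) (u : ℍ[F,a,b]) :
    cayMul e x (u,0) = (x.1*u, x.2*star u) := by simp [cayMul]
theorem cay_T (e u v : ℍ[F,a,b]) :
    cayMul e ((0:ℍ[F,a,b]),u) (0,v) = (e*(star v * u), 0) := by simp [cayMul]

theorem caym_a (e u : ℍ[F,a,b]) (y) : caymMul e (u,0) y = (u*y.1, y.2*u) := by simp [caymMul]
theorem caym_b (e : ℍ[F,a,b]) (x) (u : ℍ[F,a,b]) :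
    caymMul e x (u,0) = (x.1*u, x.2*star u) := by simp [caymMul]
theorem caym_T (e u v : ℍ[F,a,b]) :
    caymMul e ((0:ℍ[F,a,b]),u) (0,v) = (star v * (e*u), 0) := by simp [caymMul]

theorem cayr_a (e u : ℍ[F,a,b]) (y) : cayrMul e (u,0) y = (u*y.1, y.2*u) := by simp [cayrMul]
theorem cayr_b (e : ℍ[F,a,b]) (x) (u : ℍ[F,a,b]) :
    cayrMul e x (u,0) = (x.1*u, x.2*star u) := by simp [cayrMul]
theorem cayr_T (e u v : ℍ[F,a,b]) :
    cayrMul e ((0:ℍ[F,a,b]),u) (0,v) = ((star v * u)*e, 0) := by simp [cayrMul]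

-- generic forward direction
theorem la_fwd (M : ℍ[F,a,b] × ℍ[F,a,b] → ℍ[F,a,b] × ℍ[F,a,b] → ℍ[F,a,b] × ℍ[F,a,b])
    (hMa : ∀ (u : ℍ[F,a,b]) y, M (u,0) y = (u*y.1, y.2*u)) (u : ℍ[F,a,b]) :
    ∀ y, M (u,0) (M (u,0) y) = M (M (u,0) (u,0)) y := by
  intro y
  have h1 : M (u,0) (u,0) = ((u*u : ℍ[F,a,b]), 0) := by rw [hMa]; simp
  rw [h1, hMa, hMa, hMa]
  exact Prod.ext (by simp [mul_assoc]) (by simp [mul_assoc])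

-- backward for cayMul
theorem la_bwd_cay (hD : ∀ x y : ℍ[F,a,b], x * y = 0 → x = 0 ∨ y = 0)
    (h2 : (2:F) ≠ 0) (e : ℍ[F,a,b]) (he : ∀ t : F, e ≠ algebraMap F ℍ[F,a,b] t)
    (x : ℍ[F,a,b] × ℍ[F,a,b])
    (hx : ∀ y, cayMul e x (cayMul e x y) = cayMul e (cayMul e x x) y) : x.2 = 0 := by
  have E := congrArg Prod.snd (hx (0,1))
  simp only [cayMul, star_one, one_mul, mul_zero, zero_mul, star_zero, mul_one, add_zero,
    zero_add, star_mul] at E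
  have E2 : x.2 * star x.2 * star e = e * (star x.2 * x.2) := by
    rw [mul_assoc]; exact add_left_cancel E
  have E3 : algebraMap F ℍ[F,a,b] (nrm x.2) * (star e - e) = 0 := by
    rw [mul_sub, sub_eq_zero]
    calc algebraMap F ℍ[F,a,b] (nrm x.2) * star e = x.2 * star x.2 * star e := by
          rw [mul_star_self']
      _ = e * (star x.2 * x.2) := E2
      _ = e * algebraMap F ℍ[F,a,b] (nrm x.2) := by rw [star_mul_self']
      _ = algebraMap F ℍ[F,a,b] (nrm x.2) * e := (Algebra.commutes _ _).symm
  rcases hD _ _ E3 with h | h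
  · apply nrm_eq_zero hD
    simpa [alg_re] using congrArg QuaternionAlgebra.re h
  · exact absurd (star_eq_self h2 e (sub_eq_zero.mp h)) (he _)

-- backward for cayrMul
theorem la_bwd_cayr (hD : ∀ x y : ℍ[F,a,b], x * y = 0 → x = 0 ∨ y = 0)
    (h2 : (2:F) ≠ 0) (ha : a ≠ 0) (hb : b ≠ 0)
    (e : ℍ[F,a,b]) (he : ∀ t : F, e ≠ algebraMap F ℍ[F,a,b] t)
    (x : ℍ[F,a,b] × ℍ[F,a,b])
    (hx : ∀ y, cayrMul e x (cayrMul e x y) = cayrMul e (cayrMul e x x) y) : x.2 = 0 := by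
  -- key: for every u', nrm x.2 • (u' * e) = nrm x.2 • (e * u')
  have key : ∀ u' : ℍ[F,a,b],
      algebraMap F ℍ[F,a,b] (nrm x.2) * (u' * e - e * u') = 0 := by
    intro u'
    have E := congrArg Prod.fst (hx (u',0))
    simp only [cayrMul, star_zero, zero_mul, mul_zero, add_zero, star_mul, star_star,
      zero_add] at E
    have hm := star_mul_self' x.2
    have E2 : u' * (star x.2 * x.2) * e = (star x.2 * x.2) * e * u' := by
      linear_combination (norm := noncomm_ring) E
    rw [hm] at E2
    rw [mul_sub, sub_eq_zero]
    calc algebraMap F ℍ[F,a,b] (nrm x.2) * (u' * e)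
        = u' * algebraMap F ℍ[F,a,b] (nrm x.2) * e := by
          rw [← mul_assoc, Algebra.commutes]
      _ = algebraMap F ℍ[F,a,b] (nrm x.2) * e * u' := E2
      _ = algebraMap F ℍ[F,a,b] (nrm x.2) * (e * u') := by rw [mul_assoc]
  by_contra hne
  have hn := nrm_ne_zero hD hne
  have hcomm : ∀ u' : ℍ[F,a,b], u' * e = e * u' := by
    intro u'
    rcases hD _ _ (key u') with h | h
    · exact absurd h (alg_ne_zero hn)
    · exact sub_eq_zero.mp h
  exact he e.re (central_eq h2 ha hb e (hcomm qi).symm (hcomm qj).symm)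

theorem la_bwd_caym (hD : ∀ x y : ℍ[F,a,b], x * y = 0 → x = 0 ∨ y = 0)
    (h2 : (2:F) ≠ 0) (ha : a ≠ 0) (hb : b ≠ 0)
    (e : ℍ[F,a,b]) (he : ∀ t : F, e ≠ algebraMap F ℍ[F,a,b] t)
    (x : ℍ[F,a,b] × ℍ[F,a,b])
    (hx : ∀ y, caymMul e x (caymMul e x y) = caymMul e (caymMul e x x) y) : x.2 = 0 := by
  have key : ∀ u' : ℍ[F,a,b], (star x.2 * (e * x.2)) * u' = u' * (star x.2 * (e * x.2)) := by
    intro u'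
    have E := congrArg Prod.fst (hx (u',0))
    simp only [caymMul, star_zero, zero_mul, mul_zero, add_zero, star_mul, star_star,
      zero_add] at E
    linear_combination (norm := noncomm_ring) -E
  set m : ℍ[F,a,b] := star x.2 * (e * x.2) with hm
  by_contra hne
  have hn := nrm_ne_zero hD hne
  have hmc : m = algebraMap F ℍ[F,a,b] m.re := central_eq h2 ha hb m (key qi) (key qj)
  -- sandwich: x.2 * m * star x.2
  have hA : x.2 * m * star x.2 = algebraMap F ℍ[F,a,b] (nrm x.2 * nrm x.2) * e := by
    calc x.2 * m * star x.2 = (x.2 * star x.2) * e * (x.2 * star x.2) := by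
          rw [hm]; noncomm_ring
      _ = algebraMap F ℍ[F,a,b] (nrm x.2) * e * algebraMap F ℍ[F,a,b] (nrm x.2) := by
          rw [mul_star_self']
      _ = algebraMap F ℍ[F,a,b] (nrm x.2 * nrm x.2) * e := by
          rw [mul_assoc, ← Algebra.commutes (nrm x.2), ← mul_assoc, ← map_mul]
  have hB : x.2 * m * star x.2 = algebraMap F ℍ[F,a,b] (m.re * nrm x.2) := by
    calc x.2 * m * star x.2 = x.2 * algebraMap F ℍ[F,a,b] m.re * star x.2 := by rw [← hmc]
      _ = algebraMap F ℍ[F,a,b] m.re * (x.2 * star x.2) := by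
          rw [← Algebra.commutes (m.re), mul_assoc]
      _ = algebraMap F ℍ[F,a,b] (m.re * nrm x.2) := by rw [mul_star_self', ← map_mul]
  have hs : (nrm x.2 * nrm x.2 : F) ≠ 0 := mul_ne_zero hn hn
  apply he (m.re * nrm x.2 / (nrm x.2 * nrm x.2))
  apply cancel_left hD (alg_ne_zero hs)
  rw [← hA, hB, ← map_mul, mul_div_cancel₀ _ hs]

theorem extract (hD : ∀ x y : ℍ[F,a,b], x * y = 0 → x = 0 ∨ y = 0) (h2 : (2:F) ≠ 0)
    (M₁ M₂ : ℍ[F,a,b] × ℍ[F,a,b] → ℍ[F,a,b] × ℍ[F,a,b] → ℍ[F,a,b] × ℍ[F,a,b])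
    (T₁ T₂ : ℍ[F,a,b] → ℍ[F,a,b] → ℍ[F,a,b])
    (hM₁a : ∀ (u : ℍ[F,a,b]) y, M₁ (u,0) y = (u*y.1, y.2*u))
    (hM₁b : ∀ x (u : ℍ[F,a,b]), M₁ x (u,0) = (x.1*u, x.2*star u))
    (hM₂a : ∀ (u : ℍ[F,a,b]) y, M₂ (u,0) y = (u*y.1, y.2*u))
    (hM₂b : ∀ x (u : ℍ[F,a,b]), M₂ x (u,0) = (x.1*u, x.2*star u))
    (hT₁ : ∀ u v : ℍ[F,a,b], M₁ (0,u) (0,v) = (T₁ u v, 0))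
    (hT₂ : ∀ u v : ℍ[F,a,b], M₂ (0,u) (0,v) = (T₂ u v, 0))
    (hLA₁ : ∀ x : ℍ[F,a,b] × ℍ[F,a,b],
      (∀ y, M₁ x (M₁ x y) = M₁ (M₁ x x) y) → x.2 = 0)
    (hLA₂ : ∀ x : ℍ[F,a,b] × ℍ[F,a,b],
      (∀ y, M₂ x (M₂ x y) = M₂ (M₂ x x) y) → x.2 = 0)
    (G : (ℍ[F,a,b] × ℍ[F,a,b]) ≃ₗ[F] ℍ[F,a,b] × ℍ[F,a,b])
    (hG1 : G (1, 0) = (1, 0))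
    (hGm : ∀ x y, G (M₁ x y) = M₂ (G x) (G y)) :
    ∃ (φ : ℍ[F,a,b] → ℍ[F,a,b]) (s : ℍ[F,a,b]), Function.Surjective φ ∧ φ 1 = 1 ∧
      (∀ u u', φ (u*u') = φ u * φ u') ∧ (∀ u, φ (star u) = star (φ u)) ∧ s ≠ 0 ∧
      (∀ u v, φ (T₁ u v) = T₂ (s * φ u) (s * φ v)) := by
  classical
  set φ : ℍ[F,a,b] → ℍ[F,a,b] := fun u => (G (u,0)).1 with hφ
  have hGz : ∀ u : ℍ[F,a,b], G (u,0) = (φ u, 0) := by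
    intro u
    have h2' : (G (u,0)).2 = 0 := by
      apply hLA₂
      intro y'
      have hy' : y' = G (G.symm y') := (G.apply_symm_apply y').symm
      rw [hy', ← hGm, ← hGm, la_fwd M₁ hM₁a u (G.symm y'), hGm, hGm]
    exact Prod.ext rfl h2'
  have hφ1 : φ 1 = 1 := by
    have := congrArg Prod.fst hG1; simpa [hφ] using this
  have hφmul : ∀ u u' : ℍ[F,a,b], φ (u*u') = φ u * φ u' := by
    intro u u'
    have h1 : M₁ ((u : ℍ[F,a,b]),0) (u',0) = ((u*u' : ℍ[F,a,b]), 0) := by rw [hM₁a]; simp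
    have h2' : M₂ ((φ u : ℍ[F,a,b]),0) (φ u',0) = ((φ u * φ u' : ℍ[F,a,b]), 0) := by
      rw [hM₂a]; simp
    have := hGm (u,0) (u',0)
    rw [h1, hGz, hGz, hGz, h2'] at this
    exact congrArg Prod.fst this
  have hφsurj : Function.Surjective φ := by
    intro X
    set x := G.symm (X, 0) with hx
    have hx2 : x.2 = 0 := by
      apply hLA₁
      intro y
      apply G.injective
      have hGx : G x = (X, 0) := by rw [hx, G.apply_symm_apply]
      rw [hGm, hGm, hGm, hGm, hGx, la_fwd M₂ hM₂a X (G y)]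
    refine ⟨x.1, ?_⟩
    have hxx : ((x.1, 0) : ℍ[F,a,b] × ℍ[F,a,b]) = x := Prod.ext rfl hx2.symm
    have : G (x.1, 0) = (X, 0) := by rw [hxx, hx, G.apply_symm_apply]
    simpa [hφ] using congrArg Prod.fst this
  have hφinj : Function.Injective φ := by
    intro u u' h
    have h' : G (u,0) = G (u',0) := by rw [hGz, hGz, h]
    exact congrArg Prod.fst (G.injective h')
  have hφ0 : φ (0:ℍ[F,a,b]) = 0 := by
    have : G ((0:ℍ[F,a,b]),(0:ℍ[F,a,b])) = 0 := map_zero G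
    simpa [hφ] using congrArg Prod.fst this
  have hφneg : ∀ u : ℍ[F,a,b], φ (-u) = -φ u := by
    intro u
    have hpair : ((-u, 0) : ℍ[F,a,b] × ℍ[F,a,b]) = -(u,0) := by
      apply Prod.ext <;> simp
    have : G (-u, 0) = -G (u,0) := by rw [hpair, map_neg]
    rw [hGz, hGz] at this
    simpa using congrArg Prod.fst this
  set p := (G ((0:ℍ[F,a,b]),1)).1 with hpdef
  set s := (G ((0:ℍ[F,a,b]),1)).2 with hsdef
  have hps : G ((0:ℍ[F,a,b]),1) = (p, s) := rfl
  have h0u : ∀ u : ℍ[F,a,b], G (0,u) = (φ u * p, s * φ u) := by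
    intro u
    have h1 : M₁ ((u:ℍ[F,a,b]),0) (0,1) = ((0:ℍ[F,a,b]), u) := by rw [hM₁a]; simp
    have h3 := hGm (u,0) (0,1)
    rw [h1, hGz, hps, hM₂a] at h3
    simpa using h3
  have h0su : ∀ u : ℍ[F,a,b], G (0, star u) = (p * φ u, s * star (φ u)) := by
    intro u
    have h1 : M₁ ((0:ℍ[F,a,b]),1) (u,0) = ((0:ℍ[F,a,b]), star u) := by rw [hM₁b]; simp
    have h3 := hGm (0,1) (u,0)
    rw [h1, hps, hGz, hM₂b] at h3
    simpa using h3
  have hsne : s ≠ 0 := by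
    intro hs
    obtain ⟨u₀, hu₀⟩ := hφsurj p
    have he : G (u₀, 0) = G (0,1) := by rw [hGz, hu₀, hps, hs]
    have := congrArg Prod.snd (G.injective he)
    exact one_ne_zero (α := ℍ[F,a,b]) this.symm
  have hφstar : ∀ u, φ (star u) = star (φ u) := by
    intro u
    have e1 := congrArg Prod.snd (h0u (star u))
    have e2 := congrArg Prod.snd (h0su u)
    rw [h0su] at e1
    exact cancel_left hD hsne e1.symm
  have eq3 : ∀ u, φ (star u) * p = p * φ u := by
    intro u
    have e1 := congrArg Prod.fst (h0u (star u))
    have e2 := congrArg Prod.fst (h0su u)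
    rw [h0su] at e1
    exact e1.symm
  have hp : p = 0 := by
    by_contra hp
    have hik : ∀ q : ℍ[F,a,b], star q = -q → p * φ q = -(φ q * p) := by
      intro q hq
      have h3 := eq3 q
      rw [hq, hφneg] at h3
      linear_combination (norm := noncomm_ring) -h3
    have hpi := hik qi star_qi
    have hpj := hik qj star_qj
    have hpk := hik qk star_qk
    have hkk : p * φ qk = φ qk * p := by
      have hk' : φ qk = φ qi * φ qj := by rw [← hφmul, qi_mul_qj]
      rw [hk']
      calc p * (φ qi * φ qj) = (p * φ qi) * φ qj := (mul_assoc _ _ _).symm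
        _ = (-(φ qi * p)) * φ qj := by rw [hpi]
        _ = -(φ qi * (p * φ qj)) := by noncomm_ring
        _ = -(φ qi * (-(φ qj * p))) := by rw [hpj]
        _ = (φ qi * φ qj) * p := by noncomm_ring
    have h2x : algebraMap F ℍ[F,a,b] (2:F) * (φ qk * p) = 0 := by
      have : (algebraMap F ℍ[F,a,b] (2:F)) = (2 : ℍ[F,a,b]) := by
        exact map_ofNat _ 2
      rw [this, two_mul]
      rw [hkk] at hpk
      linear_combination (norm := noncomm_ring) hpk
    rcases hD _ _ h2x with h | h
    · exact alg_ne_zero h2 h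
    · rcases hD _ _ h with h' | h'
      · exact qk_ne_zero (hφinj (by rw [h', hφ0]))
      · exact hp h'
  refine ⟨φ, s, hφsurj, hφ1, hφmul, hφstar, hsne, ?_⟩
  intro u v
  have h1 := hGm (0,u) (0,v)
  rw [hT₁, hGz, h0u, h0u] at h1
  simp only [hp, mul_zero] at h1
  rw [hT₂] at h1
  exact congrArg Prod.fst h1


end Stmt13Aux

open Stmt13Aux in
/-- Let `D` be a quaternion division algebra over `F` (char ≠ 2), `L = F·1 + F·w` a
separable quadratic subfield (`w² = α·1`, `α ∈ Fˣ`), and `c, d ∈ L \ F·1`. Then there is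
no unital `F`-algebra isomorphism `Cay(D,c) → Cay_r(D,d)`, none `Cay_m(D,c) → Cay(D,d)`,
and none `Cay_m(D,c) → Cay_r(D,d)`. -/
theorem stmt_13 {F : Type*} [Field F] (hchar : (2 : F) ≠ 0) {a b : F}
    (hD : ∀ x y : ℍ[F,a,b], x * y = 0 → x = 0 ∨ y = 0)
    (w : ℍ[F,a,b]) (hw1 : ∀ t : F, w ≠ algebraMap F ℍ[F,a,b] t)
    (α : F) (hα : α ≠ 0) (hw2 : w * w = algebraMap F ℍ[F,a,b] α)
    (c d : ℍ[F,a,b]) (hcL : memL w c) (hdL : memL w d)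
    (hc1 : ∀ t : F, c ≠ algebraMap F ℍ[F,a,b] t)
    (hd1 : ∀ t : F, d ≠ algebraMap F ℍ[F,a,b] t) :
    ¬(∃ G : (ℍ[F,a,b] × ℍ[F,a,b]) ≃ₗ[F] ℍ[F,a,b] × ℍ[F,a,b],
        G (1, 0) = (1, 0) ∧ ∀ x y, G (cayMul c x y) = cayrMul d (G x) (G y)) ∧
    ¬(∃ G : (ℍ[F,a,b] × ℍ[F,a,b]) ≃ₗ[F] ℍ[F,a,b] × ℍ[F,a,b],
        G (1, 0) = (1, 0) ∧ ∀ x y, G (caymMul c x y) = cayMul d (G x) (G y)) ∧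
    ¬(∃ G : (ℍ[F,a,b] × ℍ[F,a,b]) ≃ₗ[F] ℍ[F,a,b] × ℍ[F,a,b],
        G (1, 0) = (1, 0) ∧ ∀ x y, G (caymMul c x y) = cayrMul d (G x) (G y)) := by
  clear hw1 hα hw2 hcL hdL
  have ha := a_ne_zero hD
  have hb := b_ne_zero hD
  refine ⟨?_, ?_, ?_⟩
  · rintro ⟨G, hG1, hGm⟩
    obtain ⟨φ, s, hsurj, hone, hmul, hstar, hsne, hfin⟩ :=
      extract hD hchar (cayMul c) (cayrMul d) (fun u v => c * (star v * u))
        (fun u v => (star v * u) * d) (cay_a c) (cay_b c) (cayr_a d) (cayr_b d)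
        (cay_T c) (cayr_T d) (la_bwd_cay hD hchar c hc1)
        (la_bwd_cayr hD hchar ha hb d hd1) G hG1 hGm
    have hμ := star_mul_self' s
    have hμne : nrm s ≠ 0 := nrm_ne_zero hD hsne
    have hA : ∀ X : ℍ[F,a,b], φ c * X = algebraMap F ℍ[F,a,b] (nrm s) * (X * d) := by
      intro X
      obtain ⟨u, rfl⟩ := hsurj X
      have h3 := hfin u 1
      rw [star_one, one_mul, hone, mul_one, hmul] at h3
      calc φ c * φ u = (star s * (s * φ u)) * d := h3
        _ = (star s * s) * (φ u * d) := by noncomm_ring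
        _ = algebraMap F ℍ[F,a,b] (nrm s) * (φ u * d) := by rw [hμ]
    have hc : φ c = algebraMap F ℍ[F,a,b] (nrm s) * d := by simpa using hA 1
    have hcomm : ∀ X : ℍ[F,a,b], d * X = X * d := by
      intro X
      have h3 := hA X
      rw [hc] at h3
      have h4 : algebraMap F ℍ[F,a,b] (nrm s) * (d * X - X * d) = 0 := by
        rw [mul_sub, sub_eq_zero, ← mul_assoc, h3]
      rcases hD _ _ h4 with h | h
      · exact absurd h (alg_ne_zero hμne)
      · exact sub_eq_zero.mp h
    exact hd1 d.re (central_eq hchar ha hb d (hcomm qi) (hcomm qj))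
  · rintro ⟨G, hG1, hGm⟩
    obtain ⟨φ, s, hsurj, hone, hmul, hstar, hsne, hfin⟩ :=
      extract hD hchar (caymMul c) (cayMul d) (fun u v => star v * (c * u))
        (fun u v => d * (star v * u)) (caym_a c) (caym_b c) (cay_a d) (cay_b d)
        (caym_T c) (cay_T d) (la_bwd_caym hD hchar ha hb c hc1)
        (la_bwd_cay hD hchar d hd1) G hG1 hGm
    have hμ := star_mul_self' s
    have hμne : nrm s ≠ 0 := nrm_ne_zero hD hsne
    have hA : ∀ Y : ℍ[F,a,b], Y * φ c = algebraMap F ℍ[F,a,b] (nrm s) * (d * Y) := by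
      intro Y
      obtain ⟨v, hv⟩ := hsurj (star Y)
      have hY : star (φ v) = Y := by rw [hv, star_star]
      have h3 := hfin 1 v
      rw [mul_one, hone, mul_one, hmul, hstar, hv, star_star] at h3
      calc Y * φ c = d * (star (s * star Y) * s) := h3
        _ = d * (Y * (star s * s)) := by rw [star_mul, star_star, mul_assoc]
        _ = d * (Y * algebraMap F ℍ[F,a,b] (nrm s)) := by rw [hμ]
        _ = algebraMap F ℍ[F,a,b] (nrm s) * (d * Y) := by
            rw [← Algebra.commutes (nrm s) Y, ← mul_assoc, ← Algebra.commutes (nrm s) d,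
              mul_assoc]
    have hc : φ c = algebraMap F ℍ[F,a,b] (nrm s) * d := by simpa using hA 1
    have hcomm : ∀ Y : ℍ[F,a,b], d * Y = Y * d := by
      intro Y
      have h3 := hA Y
      rw [hc] at h3
      have h4 : algebraMap F ℍ[F,a,b] (nrm s) * (d * Y - Y * d) = 0 := by
        rw [mul_sub, sub_eq_zero]
        calc algebraMap F ℍ[F,a,b] (nrm s) * (d * Y)
            = Y * (algebraMap F ℍ[F,a,b] (nrm s) * d) := h3.symm
          _ = algebraMap F ℍ[F,a,b] (nrm s) * (Y * d) := by
              rw [← mul_assoc, ← Algebra.commutes (nrm s) Y, mul_assoc]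
      rcases hD _ _ h4 with h | h
      · exact absurd h (alg_ne_zero hμne)
      · exact sub_eq_zero.mp h
    exact hd1 d.re (central_eq hchar ha hb d (hcomm qi) (hcomm qj))
  · rintro ⟨G, hG1, hGm⟩
    obtain ⟨φ, s, hsurj, hone, hmul, hstar, hsne, hfin⟩ :=
      extract hD hchar (caymMul c) (cayrMul d) (fun u v => star v * (c * u))
        (fun u v => (star v * u) * d) (caym_a c) (caym_b c) (cayr_a d) (cayr_b d)
        (caym_T c) (cayr_T d) (la_bwd_caym hD hchar ha hb c hc1)
        (la_bwd_cayr hD hchar ha hb d hd1) G hG1 hGm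
    have hμ := star_mul_self' s
    have hμne : nrm s ≠ 0 := nrm_ne_zero hD hsne
    have hA : ∀ X : ℍ[F,a,b], φ c * X = algebraMap F ℍ[F,a,b] (nrm s) * (X * d) := by
      intro X
      obtain ⟨u, rfl⟩ := hsurj X
      have h3 := hfin u 1
      rw [star_one, one_mul, hone, mul_one, hmul] at h3
      calc φ c * φ u = (star s * (s * φ u)) * d := h3
        _ = (star s * s) * (φ u * d) := by noncomm_ring
        _ = algebraMap F ℍ[F,a,b] (nrm s) * (φ u * d) := by rw [hμ]
    have hc : φ c = algebraMap F ℍ[F,a,b] (nrm s) * d := by simpa using hA 1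
    have hcomm : ∀ X : ℍ[F,a,b], d * X = X * d := by
      intro X
      have h3 := hA X
      rw [hc] at h3
      have h4 : algebraMap F ℍ[F,a,b] (nrm s) * (d * X - X * d) = 0 := by
        rw [mul_sub, sub_eq_zero, ← mul_assoc, h3]
      rcases hD _ _ h4 with h | h
      · exact absurd h (alg_ne_zero hμne)
      · exact sub_eq_zero.mp h
    exact hd1 d.re (central_eq hchar ha hb d (hcomm qi) (hcomm qj))
end

section
/- Let F be a field of characteristic ≠ 2, B a quaternion division algebra over F, c ∈ B invertible with c ∉ F·1, and A = Cay(B,c). (i) Every derivation δ of A satisfies δ((c,0)) = (0,0), and writing δ((0,1)) = (r,s) with r,s ∈ B one has σ(s) = -s, σ(r) = -r and σ(rc) = -rc. (ii) For s ∈ B, the F-linear map D₀ : A → A, D₀((u,v)) = (0, sv), is a derivation of A if and only if σ(s) = -s. -/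
open Quaternion

set_option maxHeartbeats 1600000 in
/-- Let `B` be a quaternion division algebra over a field `F` of characteristic ≠ 2 and
`c ∈ B` invertible with `c ∉ F·1`, and `A = Cay(B,c)`. (i) Every derivation `δ` of `A`
satisfies `δ((c,0)) = 0`, and with `(r,s) = δ((0,1))` one has `σ(s) = -s`, `σ(r) = -r`
and `σ(rc) = -rc`. (ii) For `s ∈ B` the map `D₀((u,v)) = (0, sv)` is a derivation of
`A` if and only if `σ(s) = -s`. -/
theorem stmt_14 {F : Type*} [Field F] (hchar : (2 : F) ≠ 0) {a b : F}
    (hB : ∀ x y : ℍ[F,a,b], x * y = 0 → x = 0 ∨ y = 0)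
    (c : ℍ[F,a,b]) (hc : IsUnit c)
    (hc1 : ∀ t : F, c ≠ algebraMap F ℍ[F,a,b] t) :
    (∀ δ : (ℍ[F,a,b] × ℍ[F,a,b]) →ₗ[F] ℍ[F,a,b] × ℍ[F,a,b],
      (∀ x y, δ (cayMul c x y) = cayMul c (δ x) y + cayMul c x (δ y)) →
      δ (c, 0) = 0 ∧
      star (δ (0, 1)).2 = -(δ (0, 1)).2 ∧
      star (δ (0, 1)).1 = -(δ (0, 1)).1 ∧
      star ((δ (0, 1)).1 * c) = -((δ (0, 1)).1 * c)) ∧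
    (∀ s : ℍ[F,a,b],
      (∀ x y : ℍ[F,a,b] × ℍ[F,a,b],
        ((0, s * (cayMul c x y).2) : ℍ[F,a,b] × ℍ[F,a,b]) =
          cayMul c (0, s * x.2) y + cayMul c x (0, s * y.2)) ↔
      star s = -s) := by
  constructor
  · intro δ hδ
    have hc0 : c ≠ 0 := hc.ne_zero
    set r := (δ (0,1)).1 with hr
    set s := (δ (0,1)).2 with hs
    have h10 : δ (1,0) = 0 := by
      have h := hδ (1,0) (1,0)
      simp [cayMul] at h
      exact h
    have hcc : δ (c,0) = (c * s + c * star s, r + star r) := by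
      have h := hδ (0,1) (0,1)
      simp [cayMul] at h
      exact h
    have hone : ∀ t : F, t • (1 : ℍ[F,a,b]) = (t : ℍ[F,a,b]) := fun t => by
      rw [← QuaternionAlgebra.coe_one, QuaternionAlgebra.smul_coe, mul_one]
    have hkey : ((c*c, 0) : ℍ[F,a,b] × ℍ[F,a,b])
        = (2*c.re) • ((c,0) : ℍ[F,a,b] × ℍ[F,a,b]) - ((c*star c).re) • ((1,0) : ℍ[F,a,b] × ℍ[F,a,b]) := by
      have h1 : c * c = ((2*c.re : F) : ℍ[F,a,b]) * c - (((c*star c).re : F) : ℍ[F,a,b]) := by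
        rw [← QuaternionAlgebra.mul_star_eq_coe, QuaternionAlgebra.star_eq_two_re_sub,
          QuaternionAlgebra.coe_commutes]
        noncomm_ring
      have h2 : (2*c.re) • ((c,0) : ℍ[F,a,b] × ℍ[F,a,b]) - ((c*star c).re) • ((1,0) : ℍ[F,a,b] × ℍ[F,a,b])
          = ((2*c.re) • c - ((c*star c).re) • (1:ℍ[F,a,b]),
             (2*c.re) • (0:ℍ[F,a,b]) - ((c*star c).re) • (0:ℍ[F,a,b])) := rfl
      rw [h2, hone, ← QuaternionAlgebra.coe_mul_eq_smul, smul_zero, smul_zero, sub_zero, h1]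
    have hsq : δ (c*c, 0) = (2*c.re) • δ (c, 0) := by
      rw [hkey, map_sub, map_smul, map_smul, h10, smul_zero, sub_zero]
    have h2ne : ((2:F) : ℍ[F,a,b]) ≠ 0 := by
      intro h
      exact hchar (by have := congrArg QuaternionAlgebra.re h; rwa [QuaternionAlgebra.re_coe] at this)
    have htwoc : ((2:F) : ℍ[F,a,b]) * c = c + c := by
      rw [QuaternionAlgebra.coe_mul_eq_smul, two_smul]
    have hcc2 : c + c ≠ ((2*c.re : F) : ℍ[F,a,b]) := by
      intro h
      have h' : ((2:F) : ℍ[F,a,b]) * (c - ((c.re : F) : ℍ[F,a,b])) = 0 := by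
        rw [mul_sub, htwoc, ← QuaternionAlgebra.coe_mul, h, sub_self]
      rcases hB _ _ h' with h2 | h2
      · exact h2ne h2
      · exact hc1 c.re (by rw [QuaternionAlgebra.coe_algebraMap]; exact sub_eq_zero.mp h2)
    -- route 3
    have h3 := hδ (c,0) (c,0)
    rw [hcc] at h3
    simp [cayMul] at h3
    have hκc : c * s + c * star s = (2*s.re) • c := by
      rw [← mul_add, QuaternionAlgebra.self_add_star', zero_mul, add_zero, QuaternionAlgebra.mul_coe_eq_smul]
    -- combine
    have e2 : (2*c.re) • ((2*s.re) • c) = ((2*s.re) • c)*c + c*((2*s.re) • c) := by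
      have e := hsq.symm.trans h3
      rw [hcc] at e
      have e' := congrArg Prod.fst e
      simp only [Prod.smul_fst] at e'
      rw [hκc] at e'
      exact e'
    have hκ0 : (2*s.re : F) = 0 := by
      by_contra hk
      rw [smul_mul_assoc, mul_smul_comm, ← smul_add, smul_comm] at e2
      have e3 := smul_right_injective (ℍ[F,a,b]) hk e2
      -- e3 : (2*c.re) • c = c*c + c*c
      have e4 : c * (c + c - ((2*c.re : F) : ℍ[F,a,b])) = 0 := by
        rw [mul_sub, mul_add, QuaternionAlgebra.mul_coe_eq_smul, e3, sub_self]
      rcases hB _ _ e4 with h2 | h2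
      · exact hc0 h2
      · exact hcc2 (sub_eq_zero.mp h2)
    have hstars : star s = -s := by
      have : s + star s = 0 := by
        rw [QuaternionAlgebra.self_add_star', zero_mul, add_zero, hκ0, QuaternionAlgebra.coe_zero]
      exact eq_neg_of_add_eq_zero_left (by rw [add_comm]; exact this)
    have hcc' : δ (c,0) = (0, r + star r) := by
      rw [hcc, hstars, mul_neg, add_neg_cancel]
    -- route 4 : δ (0, c)
    have h4 := hδ (c,0) (0,1)
    rw [hcc'] at h4
    simp [cayMul] at h4
    -- route 5 : δ (0, star c)
    have h5 := hδ (0,1) (c,0)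
    rw [hcc'] at h5
    simp [cayMul] at h5
    -- route 6 : δ (c*c, 0) again
    have h6 := hδ (0,1) (0, star c)
    rw [h5] at h6
    simp [cayMul, hstars] at h6
    -- combine with hsq, hcc'
    have e5 := hsq.symm.trans h6
    rw [hcc'] at e5
    have e5' := congrArg Prod.snd e5
    simp only [Prod.smul_snd, Prod.smul_fst] at e5'
    rw [← hr] at e5'
    have e6 : (2*r.re) • (star c + star c) = (2*r.re) • (c + star c) := by
      have l1 : star c * (r + star r) = (2*r.re) • star c := by
        rw [QuaternionAlgebra.self_add_star', zero_mul, add_zero, QuaternionAlgebra.mul_coe_eq_smul]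
      have l2 : (r + star r) * star c = (2*r.re) • star c := by
        rw [QuaternionAlgebra.self_add_star', zero_mul, add_zero, QuaternionAlgebra.coe_mul_eq_smul]
      have l3 : (2*c.re) • (r + star r) = (2*r.re) • (c + star c) := by
        rw [QuaternionAlgebra.self_add_star' r, QuaternionAlgebra.self_add_star' c, zero_mul, zero_mul, add_zero, add_zero,
          QuaternionAlgebra.smul_coe, QuaternionAlgebra.smul_coe, mul_comm]
      calc (2*r.re) • (star c + star c)
          = star c * (r + star r) + (r + star r) * star c := by rw [l1, l2, smul_add]
        _ = star c * r + (star c * star r + (r + star r) * star c) := by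
            rw [mul_add, add_assoc]
        _ = (2*c.re) • (r + star r) := e5'.symm
        _ = (2*r.re) • (c + star c) := l3
    have hμ0 : (2*r.re : F) = 0 := by
      by_contra hm
      have h7 := smul_right_injective (ℍ[F,a,b]) hm e6
      have hcsc : star c = c := add_right_cancel h7
      have h8 : c + c = ((2*c.re : F) : ℍ[F,a,b]) := by
        nth_rewrite 2 [← hcsc]
        rw [QuaternionAlgebra.self_add_star' c, zero_mul, add_zero]
      exact hcc2 h8
    have hMz : r + star r = 0 := by
      rw [QuaternionAlgebra.self_add_star', zero_mul, add_zero, hμ0, QuaternionAlgebra.coe_zero]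
    have hstarr : star r = -r := eq_neg_of_add_eq_zero_left (by rw [add_comm]; exact hMz)
    have hdc0 : δ (c,0) = 0 := by
      rw [hcc', hMz]; rfl
    -- Eq1 from routes 4/5 and linearity
    have hkey2 : ((0, star c) : ℍ[F,a,b] × ℍ[F,a,b])
        = (2*c.re) • ((0,1) : ℍ[F,a,b] × ℍ[F,a,b]) - ((0, c) : ℍ[F,a,b] × ℍ[F,a,b]) := by
      have h2 : (2*c.re) • ((0,1) : ℍ[F,a,b] × ℍ[F,a,b]) - ((0, c) : ℍ[F,a,b] × ℍ[F,a,b])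
          = ((2*c.re) • (0:ℍ[F,a,b]) - 0, (2*c.re) • (1:ℍ[F,a,b]) - c) := rfl
      rw [h2, hone, smul_zero, sub_zero, QuaternionAlgebra.star_eq_two_re_sub, zero_mul, add_zero]
    have hlin2 : δ (0, star c) = (2*c.re) • δ (0,1) - δ (0, c) := by
      rw [hkey2, map_sub, map_smul]
    have e7 := h5.symm.trans hlin2
    rw [h4] at e7
    have e7' := congrArg Prod.fst e7
    simp only [Prod.smul_fst, Prod.fst_sub] at e7'
    rw [add_comm (star r) r, hMz] at e7'
    have EqT : r*c + c*r = ((2*c.re : F) : ℍ[F,a,b]) * r := by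
      rw [QuaternionAlgebra.coe_mul_eq_smul]
      linear_combination (norm := noncomm_ring) e7'
    refine ⟨hdc0, hstars, hstarr, ?_⟩
    rw [star_mul, hstarr, QuaternionAlgebra.star_eq_two_re_sub]
    linear_combination (norm := noncomm_ring) EqT
  ·
    have hc0 : c ≠ 0 := hc.ne_zero
    intro s
    constructor
    · intro h
      have h1 := h (0,1) (0,1)
      simp [cayMul, Prod.ext_iff] at h1
      -- expect : 0 = c * s + c * star s  or similar
      have h2 : c * (s + star s) = 0 := by
        rw [mul_add]
        linear_combination (norm := noncomm_ring) -h1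
      rcases hB _ _ h2 with h3 | h3
      · exact absurd h3 hc0
      · linear_combination (norm := noncomm_ring) h3
    · intro hs x y
      simp [cayMul, Prod.ext_iff, hs]
      constructor
      · noncomm_ring
      · noncomm_ring
end

section
/- Let F be a field of characteristic ≠ 2, B a quaternion division algebra over F, c ∈ B invertible with c ∉ F·1, and A = Cay_r(B,c). (i) Every derivation δ of A satisfies δ((c,0)) = (0,0), and writing δ((0,1)) = (r,s) with r,s ∈ B one has σ(s) = -s, σ(r) = -r and σ(rc) = -rc. (ii) For s ∈ B, the F-linear map D₀ : A → A, D₀((u,v)) = (0, sv), is a derivation of A if and only if σ(s) = -s. -/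
open Quaternion

set_option maxHeartbeats 1600000

/-- Let `B` be a quaternion division algebra over a field `F` of characteristic ≠ 2 and
`c ∈ B` invertible with `c ∉ F·1`, and `A = Cay_r(B,c)`. (i) Every derivation `δ` of `A`
satisfies `δ((c,0)) = 0`, and with `(r,s) = δ((0,1))` one has `σ(s) = -s`, `σ(r) = -r`
and `σ(rc) = -rc`. (ii) For `s ∈ B` the map `D₀((u,v)) = (0, sv)` is a derivation of
`A` if and only if `σ(s) = -s`. -/
theorem stmt_16 {F : Type*} [Field F] (hchar : (2 : F) ≠ 0) {a b : F}
    (hB : ∀ x y : ℍ[F,a,b], x * y = 0 → x = 0 ∨ y = 0)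
    (c : ℍ[F,a,b]) (hc : IsUnit c)
    (hc1 : ∀ t : F, c ≠ algebraMap F ℍ[F,a,b] t) :
    (∀ δ : (ℍ[F,a,b] × ℍ[F,a,b]) →ₗ[F] ℍ[F,a,b] × ℍ[F,a,b],
      (∀ x y, δ (cayrMul c x y) = cayrMul c (δ x) y + cayrMul c x (δ y)) →
      δ (c, 0) = 0 ∧
      star (δ (0, 1)).2 = -(δ (0, 1)).2 ∧
      star (δ (0, 1)).1 = -(δ (0, 1)).1 ∧
      star ((δ (0, 1)).1 * c) = -((δ (0, 1)).1 * c)) ∧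
    (∀ s : ℍ[F,a,b],
      (∀ x y : ℍ[F,a,b] × ℍ[F,a,b],
        ((0, s * (cayrMul c x y).2) : ℍ[F,a,b] × ℍ[F,a,b]) =
          cayrMul c (0, s * x.2) y + cayrMul c x (0, s * y.2)) ↔
      star s = -s) := by
  have hcne : c ≠ 0 := hc.ne_zero
  have hhalf : ∀ x : F, x = -x → x = 0 := by
    intro x hx
    have h2 : 2 * x = 0 := by linear_combination hx
    rcases mul_eq_zero.mp h2 with h | h
    · exact absurd h hchar
    · exact h
  have hcsc : c - star c ≠ 0 := by
    intro h
    rw [sub_eq_zero] at h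
    have hI : c.imI = 0 := hhalf _ (by
      have := congrArg QuaternionAlgebra.imI h
      rwa [QuaternionAlgebra.imI_star] at this)
    have hJ : c.imJ = 0 := hhalf _ (by
      have := congrArg QuaternionAlgebra.imJ h
      rwa [QuaternionAlgebra.imJ_star] at this)
    have hK : c.imK = 0 := hhalf _ (by
      have := congrArg QuaternionAlgebra.imK h
      rwa [QuaternionAlgebra.imK_star] at this)
    refine hc1 c.re ?_
    apply QuaternionAlgebra.ext <;>
      simp [QuaternionAlgebra.coe_algebraMap, hI, hJ, hK]
  constructor
  · intro δ hδ
    obtain ⟨r, s, hrs⟩ : ∃ r s : ℍ[F,a,b], δ (0,1) = (r, s) := ⟨_, _, rfl⟩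
    -- δ of the unit is zero
    have h10 : δ (1, 0) = 0 := by
      have h := hδ (1,0) (1,0)
      simp only [cayrMul, star_one, star_zero, one_mul, mul_one, zero_mul, mul_zero,
        add_zero, zero_add, Prod.mk.eta] at h
      have h2 : δ (1, 0) + 0 = δ (1, 0) + δ (1, 0) := by rw [add_zero]; exact h
      exact (add_left_cancel h2).symm
    -- δ (c, 0)
    have hA : δ (c, 0) = (s * c + star s * c, r + star r) := by
      have h := hδ (0,1) (0,1)
      rw [hrs] at h
      simpa only [cayrMul, star_one, star_zero, one_mul, mul_one, zero_mul, mul_zero,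
        add_zero, zero_add, Prod.mk_add_mk] using h
    have hL2 : ∀ u : ℍ[F,a,b],
        δ (0, u) = ((δ (u, 0)).2 * c + u * r, (δ (u, 0)).1 + s * u) := by
      intro u
      have h := hδ (u, 0) (0, 1)
      rw [hrs] at h
      simpa only [cayrMul, star_one, star_zero, one_mul, mul_one, zero_mul, mul_zero,
        add_zero, zero_add, Prod.mk_add_mk] using h
    have hL3 : ∀ u : ℍ[F,a,b],
        δ (u * c, 0) = ((δ (0, u)).2 * c + star s * u * c, (δ (0, u)).1 + u * star r) := by
      intro u
      have h := hδ (0, u) (0, 1)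
      rw [hrs] at h
      simpa only [cayrMul, star_one, star_zero, one_mul, mul_one, zero_mul, mul_zero,
        add_zero, zero_add, Prod.mk_add_mk] using h
    have hL1 : ∀ u v : ℍ[F,a,b],
        δ (u * v, 0) = ((δ (u, 0)).1 * v + u * (δ (v, 0)).1,
          (δ (u, 0)).2 * star v + (δ (v, 0)).2 * u) := by
      intro u v
      have h := hδ (u, 0) (v, 0)
      simpa only [cayrMul, star_one, star_zero, one_mul, mul_one, zero_mul, mul_zero,
        add_zero, zero_add, Prod.mk_add_mk] using h
    have hL4 : ∀ u v : ℍ[F,a,b],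
        δ (0, v * u) = (star v * (δ (u, 0)).2 * c + u * (δ (0, v)).1,
          v * (δ (u, 0)).1 + (δ (0, v)).2 * u) := by
      intro u v
      have h := hδ (u, 0) (0, v)
      simpa only [cayrMul, star_one, star_zero, one_mul, mul_one, zero_mul, mul_zero,
        add_zero, zero_add, Prod.mk_add_mk] using h
    -- δ (0, c)
    have h0c : δ (0, c) = ((r + star r) * c + c * r, (s * c + star s * c) + s * c) := by
      rw [hL2 c, hA]
    -- δ (c*c, 0) via linearity
    have hcc : δ (c * c, 0) = (2 * c.re) • δ (c, 0) := by
      have hdec : ((c * c, (0:ℍ[F,a,b])) : ℍ[F,a,b] × ℍ[F,a,b]) =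
          (2 * c.re) • ((c, 0) : ℍ[F,a,b] × ℍ[F,a,b]) -
            ((c * star c).re) • ((1, 0) : ℍ[F,a,b] × ℍ[F,a,b]) := by
        rw [Prod.smul_mk, Prod.smul_mk, smul_zero, smul_zero, Prod.mk_sub_mk, sub_zero]
        refine Prod.ext ?_ rfl
        show c * c = (2 * c.re) • c - ((c * star c).re) • (1 : ℍ[F,a,b])
        rw [Algebra.smul_def, Algebra.smul_def, mul_one, QuaternionAlgebra.coe_algebraMap,
          ← QuaternionAlgebra.mul_star_eq_coe, ← (by rw [QuaternionAlgebra.self_add_star' c, zero_mul, add_zero] : c + star c = ((2 * c.re : F) : ℍ[F,a,b])),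
          add_mul, ← star_comm_self' c, add_sub_cancel_right]
      rw [hdec, map_sub, map_smul, map_smul, h10, smul_zero, sub_zero]
    have hEq := hL3 c
    rw [h0c, hcc, hA, Prod.smul_mk] at hEq
    rw [Prod.mk.injEq] at hEq
    obtain ⟨Eq1, Eq2⟩ := hEq
    simp only at Eq1 Eq2
    -- r + star r = 0
    have hrr : r + star r = 0 := by
      have hR : r + star r = ((2 * r.re : F) : ℍ[F,a,b]) := by rw [QuaternionAlgebra.self_add_star' r, zero_mul, add_zero]
      have hc2 : c * r + c * star r = (r + star r) * c := by
        rw [← mul_add, hR, QuaternionAlgebra.coe_commutes]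
      have hsm : (2 * c.re) • (r + star r) = (r + star r) * (c + star c) := by
        rw [Algebra.smul_def, QuaternionAlgebra.coe_algebraMap,
          QuaternionAlgebra.coe_commutes, QuaternionAlgebra.self_add_star' c, zero_mul, add_zero]
      have h := Eq2
      rw [add_assoc, hc2, hsm] at h
      have e2 : (r + star r) * (c - star c) = 0 := by
        have : (r + star r) * (c - star c) =
            ((r + star r) * c + (r + star r) * c) - (r + star r) * (c + star c) := by
          noncomm_ring
        rw [this, ← h, sub_self]
      exact (hB _ _ e2).resolve_right hcsc
    -- s + star s = 0
    have hss : s + star s = 0 := by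
      have hT : s + star s = ((2 * s.re : F) : ℍ[F,a,b]) := by rw [QuaternionAlgebra.self_add_star' s, zero_mul, add_zero]
      have hsm : (2 * c.re) • (s * c + star s * c) = (s + star s) * ((c + star c) * c) := by
        rw [← add_mul, Algebra.smul_def, QuaternionAlgebra.coe_algebraMap, hT,
          ← mul_assoc, ← mul_assoc, QuaternionAlgebra.coe_commutes,
          QuaternionAlgebra.self_add_star' c, zero_mul, add_zero]
      have h := Eq1
      rw [hsm] at h
      have e1 : ((s + star s) * (c - star c)) * c = 0 := by
        have : ((s + star s) * (c - star c)) * c =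
            (((s * c + star s * c) + s * c) * c + (star s * c) * c) -
              (s + star s) * ((c + star c) * c) := by
          noncomm_ring
        rw [this, ← h, sub_self]
      rcases hB _ _ e1 with h' | h'
      · exact (hB _ _ h').resolve_right hcsc
      · exact absurd h' hcne
    -- δ (c, 0) = 0
    have hdc0 : δ (c, 0) = 0 := by
      rw [hA, ← add_mul, hss, zero_mul, hrr]
      rfl
    -- the second component of δ on B is zero
    have hg : ∀ u : ℍ[F,a,b], (δ (u, 0)).2 = 0 := by
      intro u
      have h3 := hL3 u
      have h1 := hL1 u c
      rw [hL2 u] at h3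
      rw [hdc0] at h1
      simp only [Prod.fst_zero, Prod.snd_zero, mul_zero, zero_mul, add_zero] at h1
      have h32 := congrArg Prod.snd h3
      have h12 := congrArg Prod.snd h1
      simp only at h32 h12
      -- h32 : (δ (u*c,0)).2 = ((δ (u,0)).2 * c + u*r) + u * star r
      -- h12 : (δ (u*c,0)).2 = (δ (u,0)).2 * star c
      have key : (δ (u, 0)).2 * (c - star c) = 0 := by
        have e : (δ (u, 0)).2 * (c - star c) =
            ((δ (u, 0)).2 * c + u * r + u * star r) - (δ (u, 0)).2 * star c
              - u * (r + star r) := by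
          noncomm_ring
        rw [e, ← h32, ← h12, hrr, mul_zero, sub_zero, sub_self]
      exact (hB _ _ key).resolve_right hcsc
    -- r = 0
    have hcomm : ∀ u v : ℍ[F,a,b], (v * u) * r = u * (v * r) := by
      intro u v
      have h4 := hL4 u v
      rw [hL2 (v * u), hL2 v] at h4
      have h41 := congrArg Prod.fst h4
      simp only at h41
      rw [hg u, hg v, hg (v * u)] at h41
      simpa using h41
    have hr0 : r = 0 := by
      have hK : ((⟨0,1,0,0⟩ : ℍ[F,a,b]) * ⟨0,0,1,0⟩) = (⟨0,0,0,1⟩ : ℍ[F,a,b]) := by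
        ext <;> simp [QuaternionAlgebra.mk_mul_mk]
      have hJI : ((⟨0,0,1,0⟩ : ℍ[F,a,b]) * ⟨0,1,0,0⟩) = -(⟨0,0,0,1⟩ : ℍ[F,a,b]) := by
        ext <;> simp [QuaternionAlgebra.mk_mul_mk]
      have h := hcomm ⟨0,1,0,0⟩ ⟨0,0,1,0⟩
      rw [hJI, ← mul_assoc, hK, neg_mul] at h
      -- h : -((⟨0,0,0,1⟩) * r) = ⟨0,0,0,1⟩ * r
      have h2 : ((2:F) • (⟨0,0,0,1⟩ : ℍ[F,a,b])) * r = 0 := by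
        rw [smul_mul_assoc, two_smul]
        nth_rewrite 1 [← h]
        exact neg_add_cancel _
      rcases hB _ _ h2 with h' | h'
      · exfalso
        have := congrArg QuaternionAlgebra.imK h'
        simp only [QuaternionAlgebra.smul_mk, smul_eq_mul, mul_one,
          QuaternionAlgebra.imK_zero] at this
        exact hchar this
      · exact h'
    refine ⟨hdc0, ?_, ?_, ?_⟩ <;> rw [hrs]
    · show star s = -s
      exact eq_neg_of_add_eq_zero_right hss
    · show star r = -r
      rw [hr0, star_zero, neg_zero]
    · show star (r * c) = -(r * c)
      rw [hr0, zero_mul, star_zero, neg_zero]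
  · intro s
    constructor
    · intro h
      have h1 := h (0,1) (0,1)
      simp only [cayrMul, star_one, star_zero, one_mul, mul_one, zero_mul, mul_zero,
        add_zero, zero_add, Prod.mk_add_mk, Prod.mk.injEq] at h1
      have h2 : (s + star s) * c = 0 := by
        rw [add_mul, h1.1]
      have h3 : s + star s = 0 := (hB _ _ h2).resolve_right hcne
      exact eq_neg_of_add_eq_zero_right h3
    · intro hs x y
      simp only [cayrMul, star_zero, mul_zero, zero_mul, add_zero, zero_add,
        star_mul, hs, Prod.mk_add_mk, Prod.mk.injEq]
      constructor
      · noncomm_ring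
      · noncomm_ring
end

section
/- Let F be a field and C a unital F-algebra (not necessarily associative) equipped with an F-linear involution σ : C → C (σ∘σ = id, σ(1) = 1, σ(xy) = σ(y)σ(x)) which is scalar, i.e., for every x ∈ C there is N(x) ∈ F with σ(x)x = x σ(x) = N(x)·1; assume the norm N is multiplicative (N(xy) = N(x)N(y) for all x,y ∈ C), that C is flexible ((xy)x = x(yx) for all x,y), and that C has no zero divisors. Let c ∈ C with c ∉ F·1, N(c) ≠ 0, and suppose N(c) ∉ {N(x)² : x ∈ C, x ≠ 0}. Then the Cayley-Dickson doubling Cay(C,c), the F-vector space C ⊕ C with unit (1,0) and multiplication (u,v)(u',v') = (uu' + c(σ(v')v), v'u + vσ(u')), has no zero divisors, i.e., it is a division algebra; the same conclusion holds for the multiplications (uu' + σ(v')(cv), v'u + vσ(u')), (uu' + (σ(v')v)c, v'u + vσ(u')), (uu' + (cσ(v'))v, v'u + vσ(u')), (uu' + (σ(v')c)v, v'u + vσ(u')) and (uu' + σ(v')(vc), v'u + vσ(u')). -/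
/-- Generalized Cayley–Dickson doubling multiplication `(u,v)(u',v') =
`(uu' + c(σ(v')v), v'u + vσ(u'))` on `C ⊕ C` (scalar on the left). -/
def dMul1 {C : Type*} [NonAssocRing C] (σ : C → C) (c : C) (x y : C × C) : C × C :=
  (x.1 * y.1 + c * (σ y.2 * x.2), y.2 * x.1 + x.2 * σ y.1)

/-- `(u,v)(u',v') = (uu' + σ(v')(cv), v'u + vσ(u'))` (scalar in the middle). -/
def dMul2 {C : Type*} [NonAssocRing C] (σ : C → C) (c : C) (x y : C × C) : C × C :=
  (x.1 * y.1 + σ y.2 * (c * x.2), y.2 * x.1 + x.2 * σ y.1)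

/-- `(u,v)(u',v') = (uu' + (σ(v')v)c, v'u + vσ(u'))` (scalar on the right). -/
def dMul3 {C : Type*} [NonAssocRing C] (σ : C → C) (c : C) (x y : C × C) : C × C :=
  (x.1 * y.1 + (σ y.2 * x.2) * c, y.2 * x.1 + x.2 * σ y.1)

/-- `(u,v)(u',v') = (uu' + (cσ(v'))v, v'u + vσ(u'))`. -/
def dMul4 {C : Type*} [NonAssocRing C] (σ : C → C) (c : C) (x y : C × C) : C × C :=
  (x.1 * y.1 + (c * σ y.2) * x.2, y.2 * x.1 + x.2 * σ y.1)

/-- `(u,v)(u',v') = (uu' + (σ(v')c)v, v'u + vσ(u'))`. -/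
def dMul5 {C : Type*} [NonAssocRing C] (σ : C → C) (c : C) (x y : C × C) : C × C :=
  (x.1 * y.1 + (σ y.2 * c) * x.2, y.2 * x.1 + x.2 * σ y.1)

/-- `(u,v)(u',v') = (uu' + σ(v')(vc), v'u + vσ(u'))`. -/
def dMul6 {C : Type*} [NonAssocRing C] (σ : C → C) (c : C) (x y : C × C) : C × C :=
  (x.1 * y.1 + σ y.2 * (x.2 * c), y.2 * x.1 + x.2 * σ y.1)

/-- Key lemma: a generic Cayley–Dickson-type doubling has no zero divisors. -/
theorem cdKeyAux {F C : Type*} [Field F] [NonAssocRing C] [Module F C]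
    [SMulCommClass F C C] [IsScalarTower F C C]
    (σ : C →ₗ[F] C) (hσσ : ∀ x, σ (σ x) = x)
    (N : C → F)
    (hN : ∀ x : C, σ x * x = N x • (1 : C) ∧ x * σ x = N x • (1 : C))
    (hNm : ∀ x y, N (x * y) = N x * N y)
    (hdiv : ∀ x y : C, x * y = 0 → x = 0 ∨ y = 0)
    (hone : (1 : C) ≠ 0)
    (c : C) (hsq : ∀ x : C, x ≠ 0 → N c ≠ (N x) ^ 2)
    (f : C → C → C)
    (hf0 : ∀ a b, f a b = 0 → a = 0 ∨ b = 0)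
    (hf01 : ∀ b, f 0 b = 0) (hf02 : ∀ a, f a 0 = 0)
    (hfN : ∀ a b, N (f a b) = N c * N a * N b)
    (x y : C × C)
    (h1 : x.1 * y.1 + f y.2 x.2 = 0) (h2 : y.2 * x.1 + x.2 * σ y.1 = 0) :
    x = 0 ∨ y = 0 := by
  by_contra hcon
  push_neg at hcon
  obtain ⟨hx, hy⟩ := hcon
  obtain ⟨u, v⟩ := x
  obtain ⟨u', v'⟩ := y
  simp only [Prod.fst, Prod.snd] at h1 h2
  have tinj : ∀ t : F, t • (1 : C) = 0 → t = 0 := by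
    intro t ht
    by_contra h0
    apply hone
    calc (1 : C) = t⁻¹ • (t • (1 : C)) := by
          rw [smul_smul, inv_mul_cancel₀ h0, one_smul]
      _ = 0 := by rw [ht, smul_zero]
  have tinj2 : ∀ s t : F, s • (1 : C) = t • (1 : C) → s = t := by
    intro s t h
    have h' : (s - t) • (1 : C) = 0 := by rw [sub_smul, h, sub_self]
    exact sub_eq_zero.mp (tinj _ h')
  have hσ0 : ∀ z : C, σ z = 0 → z = 0 := fun z hz => by
    rw [← hσσ z, hz, map_zero]
  have hz0 : ∀ z : C, z ≠ 0 → N z ≠ 0 := by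
    intro z hz hNz
    have : σ z * z = 0 := by rw [(hN z).1, hNz, zero_smul]
    rcases hdiv _ _ this with h | h
    · exact hz (hσ0 z h)
    · exact hz h
  have hNσ : ∀ z : C, N (σ z) = N z := by
    intro z
    apply tinj2
    rw [← (hN (σ z)).1, hσσ, (hN z).2]
  have hNneg : ∀ z : C, N (-z) = N z := by
    intro z
    apply tinj2
    rw [← (hN (-z)).1, map_neg, neg_mul_neg, (hN z).1]
  have hNsmul : ∀ (t : F) (z : C), N (t • z) = t ^ 2 * N z := by
    intro t z
    apply tinj2
    rw [← (hN (t • z)).1, map_smul, smul_mul_assoc, mul_smul_comm, (hN z).1,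
      smul_smul, smul_smul]
    congr 1
    ring
  by_cases hv : v = 0
  · subst hv
    rw [hf02, add_zero] at h1
    rw [zero_mul, add_zero] at h2
    have hu : u ≠ 0 := fun h => hx (by simp [h])
    rcases hdiv _ _ h1 with h | h
    · exact hu h
    · rcases hdiv _ _ h2 with h' | h'
      · exact hy (by simp [h, h'])
      · exact hu h'
  by_cases hv' : v' = 0
  · subst hv'
    rw [zero_mul, zero_add] at h2
    rcases hdiv _ _ h2 with h | h
    · exact hv h
    · have hu' : u' ≠ 0 := fun h' => hy (by simp [h'])
      exact hu' (hσ0 _ h)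
  by_cases hu : u = 0
  · subst hu
    rw [zero_mul, zero_add] at h1
    rcases hf0 _ _ h1 with h | h
    · exact hv' h
    · exact hv h
  by_cases hu' : u' = 0
  · subst hu'
    rw [mul_zero, zero_add] at h1
    rcases hf0 _ _ h1 with h | h
    · exact hv' h
    · exact hv h
  -- main case: all of u, v, u', v' nonzero
  have e1 : u * u' = -f v' v := eq_neg_of_add_eq_zero_left h1
  have e2 : v' * u = -(v * σ u') := eq_neg_of_add_eq_zero_left h2
  have n1 : N u * N u' = N c * N v' * N v := by
    rw [← hNm, e1, hNneg, hfN]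
  have n2 : N v' * N u = N v * N u' := by
    rw [← hNm, e2, hNneg, hNm, hNσ, ← hNm]
  have hp : N v ≠ 0 := hz0 _ hv
  have hq : N v' ≠ 0 := hz0 _ hv'
  have key : N u ^ 2 = N c * N v ^ 2 := by
    have h3 : N v' * (N u ^ 2) = N v' * (N c * N v ^ 2) := by
      linear_combination N u * n2 + N v * n1
    exact mul_left_cancel₀ hq h3
  have huv : u * v ≠ 0 := by
    intro h
    rcases hdiv _ _ h with h' | h'
    · exact hu h'
    · exact hv h'
  have hzz : ((N v)⁻¹ • (u * v)) ≠ 0 := by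
    intro h
    apply huv
    have h' := congrArg (fun w : C => (N v) • w) h
    simpa [smul_smul, mul_inv_cancel₀ hp] using h'
  apply hsq _ hzz
  rw [hNsmul, hNm]
  field_simp
  linear_combination (-1 : F) * key

/-- Let `C` be a unital (possibly nonassociative) `F`-algebra with an `F`-linear scalar
involution `σ` whose norm `N` (with `σ(x)x = xσ(x) = N(x)·1`) is multiplicative, and
suppose `C` is flexible and has no zero divisors. If `c ∈ C \ F·1` has `N(c) ≠ 0` and
`N(c)` is not the square of the norm of any nonzero element, then all six generalized
Cayley–Dickson doublings of `C` by `c` have no zero divisors, i.e. are division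
algebras. -/
theorem stmt_19 {F C : Type*} [Field F] [NonAssocRing C] [Module F C]
    [SMulCommClass F C C] [IsScalarTower F C C]
    (σ : C →ₗ[F] C)
    (hσσ : ∀ x, σ (σ x) = x) (hσ1 : σ 1 = 1) (hσm : ∀ x y, σ (x * y) = σ y * σ x)
    (N : C → F)
    (hN : ∀ x : C, σ x * x = N x • (1 : C) ∧ x * σ x = N x • (1 : C))
    (hNm : ∀ x y, N (x * y) = N x * N y)
    (hflex : ∀ x y : C, (x * y) * x = x * (y * x))
    (hdiv : ∀ x y : C, x * y = 0 → x = 0 ∨ y = 0)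
    (c : C) (hc1 : ∀ t : F, c ≠ t • (1 : C))
    (hcN : N c ≠ 0)
    (hsq : ∀ x : C, x ≠ 0 → N c ≠ (N x) ^ 2) :
    (∀ x y : C × C, dMul1 σ c x y = 0 → x = 0 ∨ y = 0) ∧
    (∀ x y : C × C, dMul2 σ c x y = 0 → x = 0 ∨ y = 0) ∧
    (∀ x y : C × C, dMul3 σ c x y = 0 → x = 0 ∨ y = 0) ∧
    (∀ x y : C × C, dMul4 σ c x y = 0 → x = 0 ∨ y = 0) ∧
    (∀ x y : C × C, dMul5 σ c x y = 0 → x = 0 ∨ y = 0) ∧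
    (∀ x y : C × C, dMul6 σ c x y = 0 → x = 0 ∨ y = 0) := by
  by_cases hone : (1 : C) = 0
  · have hall : ∀ z : C, z = 0 := fun z => by rw [← mul_one z, hone, mul_zero]
    refine ⟨?_, ?_, ?_, ?_, ?_, ?_⟩ <;> intro x y _ <;> left <;>
      exact Prod.ext (hall _) (hall _)
  have tinj : ∀ t : F, t • (1 : C) = 0 → t = 0 := by
    intro t ht
    by_contra h0
    apply hone
    calc (1 : C) = t⁻¹ • (t • (1 : C)) := by
          rw [smul_smul, inv_mul_cancel₀ h0, one_smul]
      _ = 0 := by rw [ht, smul_zero]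
  have hc0 : c ≠ 0 := by
    intro h
    apply hcN
    apply tinj
    rw [← (hN c).1, h, mul_zero]
  have hσ0 : ∀ z : C, σ z = 0 → z = 0 := fun z hz => by
    rw [← hσσ z, hz, map_zero]
  have tinj2 : ∀ s t : F, s • (1 : C) = t • (1 : C) → s = t := by
    intro s t h
    have h' : (s - t) • (1 : C) = 0 := by rw [sub_smul, h, sub_self]
    exact sub_eq_zero.mp (tinj _ h')
  have hNσ : ∀ z : C, N (σ z) = N z := by
    intro z
    apply tinj2
    rw [← (hN (σ z)).1, hσσ, (hN z).2]
  refine ⟨?_, ?_, ?_, ?_, ?_, ?_⟩ <;> intro x y h <;>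
    simp only [dMul1, dMul2, dMul3, dMul4, dMul5, dMul6, Prod.ext_iff,
      Prod.fst_zero, Prod.snd_zero] at h
  · refine cdKeyAux σ hσσ N hN hNm hdiv hone c hsq (fun a b => c * (σ a * b))
      ?_ ?_ ?_ ?_ x y h.1 h.2
    · intro a b hab
      rcases hdiv _ _ hab with h' | h'
      · exact absurd h' hc0
      · rcases hdiv _ _ h' with h'' | h''
        · exact Or.inl (hσ0 _ h'')
        · exact Or.inr h''
    · intro b; simp
    · intro a; simp
    · intro a b; simp [hNm, hNσ, mul_comm, mul_left_comm, mul_assoc]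
  · refine cdKeyAux σ hσσ N hN hNm hdiv hone c hsq (fun a b => σ a * (c * b))
      ?_ ?_ ?_ ?_ x y h.1 h.2
    · intro a b hab
      rcases hdiv _ _ hab with h' | h'
      · exact Or.inl (hσ0 _ h')
      · rcases hdiv _ _ h' with h'' | h''
        · exact absurd h'' hc0
        · exact Or.inr h''
    · intro b; simp
    · intro a; simp
    · intro a b; simp [hNm, hNσ, mul_comm, mul_left_comm, mul_assoc]
  · refine cdKeyAux σ hσσ N hN hNm hdiv hone c hsq (fun a b => (σ a * b) * c)
      ?_ ?_ ?_ ?_ x y h.1 h.2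
    · intro a b hab
      rcases hdiv _ _ hab with h' | h'
      · rcases hdiv _ _ h' with h'' | h''
        · exact Or.inl (hσ0 _ h'')
        · exact Or.inr h''
      · exact absurd h' hc0
    · intro b; simp
    · intro a; simp
    · intro a b; simp [hNm, hNσ, mul_comm, mul_left_comm, mul_assoc]
  · refine cdKeyAux σ hσσ N hN hNm hdiv hone c hsq (fun a b => (c * σ a) * b)
      ?_ ?_ ?_ ?_ x y h.1 h.2
    · intro a b hab
      rcases hdiv _ _ hab with h' | h'
      · rcases hdiv _ _ h' with h'' | h''
        · exact absurd h'' hc0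
        · exact Or.inl (hσ0 _ h'')
      · exact Or.inr h'
    · intro b; simp
    · intro a; simp
    · intro a b; simp [hNm, hNσ, mul_comm, mul_left_comm, mul_assoc]
  · refine cdKeyAux σ hσσ N hN hNm hdiv hone c hsq (fun a b => (σ a * c) * b)
      ?_ ?_ ?_ ?_ x y h.1 h.2
    · intro a b hab
      rcases hdiv _ _ hab with h' | h'
      · rcases hdiv _ _ h' with h'' | h''
        · exact Or.inl (hσ0 _ h'')
        · exact absurd h'' hc0
      · exact Or.inr h'
    · intro b; simp
    · intro a; simp
    · intro a b; simp [hNm, hNσ, mul_comm, mul_left_comm, mul_assoc]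
  · refine cdKeyAux σ hσσ N hN hNm hdiv hone c hsq (fun a b => σ a * (b * c))
      ?_ ?_ ?_ ?_ x y h.1 h.2
    · intro a b hab
      rcases hdiv _ _ hab with h' | h'
      · exact Or.inl (hσ0 _ h')
      · rcases hdiv _ _ h' with h'' | h''
        · exact Or.inr h''
        · exact absurd h'' hc0
    · intro b; simp
    · intro a; simp
    · intro a b; simp [hNm, hNσ, mul_comm, mul_left_comm, mul_assoc]
end
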